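/- If the 3CM M does not halt, then for every X ∈ {O, SO, R, E} and every fair X-derivation D from ⟨R_M, {End(w)}⟩, the R₀-graph of res(D) contains an infinite clique: there is an infinite set V of terms of res(D) such that R₀(a, b) ∈ res(D) for all a, b ∈ V. -/

import Mathlib

set_option maxHeartbeats 1000000
set_option synthInstance.maxHeartbeats 1000000
set_option synthInstance.maxSize 512

attribute [local instance] Classical.propDecidable

noncomputable section

/-! ### Terms and atoms -/

/-- Variables: ordinary variables `Sum.inl n`, or fresh variables `Sum.inr (c, k)`
introduced by the trigger with code `c` for the head variable with code `k`. -/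
abbrev Var : Type := ℕ ⊕ (ℕ × ℕ)

/-- Terms: constants `Sum.inl c` or variables `Sum.inr v`. -/
abbrev FTerm : Type := ℕ ⊕ Var

def ct (n : ℕ) : FTerm := Sum.inl n
def vt (n : ℕ) : FTerm := Sum.inr (Sum.inl n)

/-- An atom: a predicate name together with its list of arguments. -/
abbrev Atom : Type := ℕ × List FTerm

/-- Active domain: all terms occurring in an atom set. -/
def adom (J : Set Atom) : Set FTerm := {t | ∃ a ∈ J, t ∈ a.2}

def atomVarsF (a : Atom) : Finset Var := (a.2.filterMap Sum.getRight?).toFinset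

def varsF (A : Finset Atom) : Finset Var := A.biUnion atomVarsF

def setVars (J : Set Atom) : Set Var := {v | ∃ a ∈ J, Sum.inr v ∈ a.2}

/-! ### Substitutions and homomorphisms -/

abbrev Subst := Var → FTerm

def applyT (σ : Subst) : FTerm → FTerm
  | Sum.inl c => Sum.inl c
  | Sum.inr v => σ v

def applyA (σ : Subst) (a : Atom) : Atom := (a.1, a.2.map (applyT σ))

def IsHomOn (σ : Subst) (A B : Set Atom) : Prop := ∀ a ∈ A, applyA σ a ∈ B

def HomBetween (A B : Set Atom) : Prop := ∃ σ : Subst, IsHomOn σ A B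

def IsRetraction (σ : Subst) (A B : Set Atom) : Prop :=
  IsHomOn σ A B ∧ ∀ v ∈ setVars A ∩ setVars B, σ v = Sum.inr v

/-- Isomorphism of atom sets: a pair of mutually inverse homomorphisms. -/
def Isomorphic (A B : Set Atom) : Prop :=
  ∃ σ τ : Subst, IsHomOn σ A B ∧ IsHomOn τ B A ∧
    (∀ a ∈ A, applyA τ (applyA σ a) = a) ∧ (∀ b ∈ B, applyA σ (applyA τ b) = b)

/-! ### Rules -/

/-- A rule is a pair (body, head). Its existential variables are the head variables
not occurring in the body; its frontier the variables shared by body and head.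
A rule is Datalog when every head variable occurs in the body. -/
abbrev Rule : Type := Finset Atom × Finset Atom

def frontierOf (R : Rule) : Finset Var := varsF R.1 ∩ varsF R.2

def DatRules (Rset : Finset Rule) : Finset Rule := Rset.filter fun R => varsF R.2 ⊆ varsF R.1
def NDatRules (Rset : Finset Rule) : Finset Rule := Rset.filter fun R => ¬ varsF R.2 ⊆ varsF R.1

/-- Satisfaction of a rule in an atom set. -/
def SatisfiesRule (J : Set Atom) (R : Rule) : Prop :=
  ∀ σ : Subst, IsHomOn σ (R.1 : Set Atom) J →
    ∃ σ' : Subst, (∀ v ∈ varsF R.1, σ' v = σ v) ∧ IsHomOn σ' (R.2 : Set Atom) J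

def IsModel (Rset : Finset Rule) (I J : Set Atom) : Prop :=
  (∀ R ∈ Rset, SatisfiesRule J R) ∧ HomBetween I J

/-- BCQ entailment: every model of the KB satisfies the query. -/
def Entails (Rset : Finset Rule) (I q : Set Atom) : Prop :=
  ∀ J : Set Atom, IsModel Rset I J → HomBetween q J

def IsUniversalModel (Rset : Finset Rule) (I U : Set Atom) : Prop :=
  IsModel Rset I U ∧ ∀ J : Set Atom, IsModel Rset I J → HomBetween U J

/-! ### Triggers -/

structure Trigger where
  rule : Rule
  sub : Subst

/-- Injective code of a trigger (a trigger is determined by its rule and the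
restriction of its substitution to the body variables). -/
def Trigger.code (t : Trigger) : ℕ :=
  Encodable.encode (t.rule, (varsF t.rule.1).image fun v => (v, t.sub v))

/-- The canonical extension of the trigger substitution, mapping each existential
variable `z` to the fresh variable unique for `z` and the trigger. -/
def Trigger.extSub (t : Trigger) : Subst := fun v =>
  if v ∈ varsF t.rule.1 then t.sub v
  else Sum.inr (Sum.inr (t.code, Encodable.encode v))

def Trigger.out (t : Trigger) : Finset Atom := t.rule.2.image (applyA t.extSub)

def Trigger.isOn (t : Trigger) (J : Set Atom) : Prop := IsHomOn t.sub (t.rule.1 : Set Atom) J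

/-! ### Chase variants, derivations, chase termination classes -/

inductive ChaseVariant : Type
  | O | SO | R | E
deriving DecidableEq

def Applicable : ChaseVariant → Trigger → Set Atom → Prop
  | .O, t, J => ¬ ((t.out : Set Atom) ⊆ J)
  | .SO, t, J => ∀ t' : Trigger, t'.rule = t.rule → t'.isOn J →
      (∀ v ∈ frontierOf t.rule, t'.sub v = t.sub v) → ¬ ((t'.out : Set Atom) ⊆ J)
  | .R, t, J => ¬ ∃ σ : Subst, IsRetraction σ (J ∪ (t.out : Set Atom)) J
  | .E, t, J => ¬ ∃ σ : Subst, IsHomOn σ (J ∪ (t.out : Set Atom)) J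

def instSeq (I : Set Atom) (steps : ℕ → Option Trigger) : ℕ → Set Atom
  | 0 => I
  | n + 1 => instSeq I steps n ∪
      (match steps n with
        | none => (∅ : Set Atom)
        | some t => (t.out : Set Atom))

/-- A (possibly infinite) derivation from the knowledge base `⟨Rset, I⟩`. -/
structure Deriv (Rset : Finset Rule) (I : Set Atom) where
  steps : ℕ → Option Trigger
  prefix_closed : ∀ n, steps n = none → steps (n + 1) = none
  valid : ∀ n t, steps n = some t →
    t.rule ∈ Rset ∧ t.isOn (instSeq I steps n) ∧ ¬ ((t.out : Set Atom) ⊆ instSeq I steps n)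

def Deriv.inst {Rset : Finset Rule} {I : Set Atom} (D : Deriv Rset I) (n : ℕ) :
    Set Atom := instSeq I D.steps n

def Deriv.res {Rset : Finset Rule} {I : Set Atom} (D : Deriv Rset I) : Set Atom :=
  ⋃ n, D.inst n

def Deriv.Finite {Rset : Finset Rule} {I : Set Atom} (D : Deriv Rset I) : Prop :=
  ∃ n, D.steps n = none

def Deriv.IsX {Rset : Finset Rule} {I : Set Atom} (X : ChaseVariant)
    (D : Deriv Rset I) : Prop :=
  ∀ n t, D.steps n = some t → Applicable X t (D.inst n)

def Deriv.Fair {Rset : Finset Rule} {I : Set Atom} (X : ChaseVariant)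
    (D : Deriv Rset I) : Prop :=
  ∀ i, ∀ t : Trigger, t.rule ∈ Rset → t.isOn (D.inst i) → Applicable X t (D.inst i) →
    ∃ j, i < j ∧ ¬ Applicable X t (D.inst j)

/-- All-instance, all-derivation chase termination. -/
def CTall (X : ChaseVariant) (Rset : Finset Rule) : Prop :=
  ∀ I : Finset Atom, ∀ D : Deriv Rset (I : Set Atom), D.IsX X → D.Fair X → D.Finite

/-- All-instance, some-derivation chase termination. -/
def CTex (X : ChaseVariant) (Rset : Finset Rule) : Prop :=
  ∀ I : Finset Atom, ∃ D : Deriv Rset (I : Set Atom), D.IsX X ∧ D.Fair X ∧ D.Finite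

inductive CTQuant : Type
  | all | ex

def CT (X : ChaseVariant) : CTQuant → Finset Rule → Prop
  | .all => CTall X
  | .ex => CTex X

/-- The result of some fair `X`-derivation from `⟨Rset, J⟩`. -/
def ChX (X : ChaseVariant) (Rset : Finset Rule) (J : Set Atom) : Set Atom :=
  if h : ∃ D : Deriv Rset J, D.IsX X ∧ D.Fair X then h.choose.res else J

/-! ### Gaifman graph, treewidth, bts -/

def gaifmanAdj (J : Set Atom) (u v : FTerm) : Prop :=
  u ≠ v ∧ ∃ a ∈ J, u ∈ a.2 ∧ v ∈ a.2

/-- The (Gaifman graph of the) atom set `J` has treewidth at most `k`: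
there is a tree decomposition all of whose bags have size at most `k + 1`. -/
def TreewidthAtMost (J : Set Atom) (k : ℕ) : Prop :=
  ∃ (ι : Type) (T : SimpleGraph ι) (bag : ι → Finset FTerm),
    T.Connected ∧ T.IsAcyclic ∧
    (∀ v ∈ adom J, ∃ i, v ∈ bag i) ∧
    (∀ u v : FTerm, gaifmanAdj J u v → ∃ i, u ∈ bag i ∧ v ∈ bag i) ∧
    (∀ v : FTerm, (SimpleGraph.induce {i | v ∈ bag i} T).Preconnected) ∧
    (∀ i, (bag i).card ≤ k + 1)

/-- Bounded-treewidth sets: for every instance, some universal model of bounded treewidth. -/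
def IsBts (Rset : Finset Rule) : Prop :=
  ∀ I : Finset Atom, ∃ (k : ℕ) (U : Set Atom),
    IsUniversalModel Rset (I : Set Atom) U ∧ TreewidthAtMost U k

/-! ### Three-counter machines -/

/-- A three-counter machine: states `0, …, m − 1` (state `0` is initial, standing for `q₁`),
and a partial transition function given by a finite table. -/
structure TCM where
  m : ℕ
  hm : 0 < m
  δ : List ((ℕ × Bool × Bool) × (ℕ × Int × Int))
  keys_nodup : (δ.map Prod.fst).Nodup
  wf : ∀ e ∈ δ, e.1.1 < m ∧ e.2.1 < m ∧ e.2.2.1.natAbs ≤ 1 ∧ e.2.2.2.natAbs ≤ 1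

/-- A configuration: state, two counters, and the time counter. -/
abbrev Config : Type := ℕ × ℕ × ℕ × ℕ

def TCM.step (M : TCM) (q : ℕ) (b1 b2 : Bool) : Option (ℕ × Int × Int) :=
  (M.δ.find? fun e => decide (e.1 = (q, b1, b2))).map Prod.snd

def TCM.next (M : TCM) (C : Config) : Option Config :=
  match M.step C.1 (decide (C.2.1 ≠ 0)) (decide (C.2.2.1 ≠ 0)) with
  | none => none
  | some (q', d1, d2) =>
      some (q', ((C.2.1 : ℤ) + d1).toNat, ((C.2.2.1 : ℤ) + d2).toNat, C.2.2.2 + 1)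

def TCM.run (M : TCM) : ℕ → Option Config
  | 0 => some (0, 0, 0, 0)
  | n + 1 => (M.run n).bind M.next

/-- The machine halts: some reachable configuration has no successor. -/
def TCM.Halts (M : TCM) : Prop := ∃ n C, M.run n = some C ∧ M.next C = none

/-! ### Prime encoding of configurations -/

/-- The least prime strictly greater than `n` (computably). -/
def nextPrime (n : ℕ) : ℕ := Nat.find (Nat.exists_infinite_primes (n + 1))

/-- `prm i` is the `(i+1)`-st prime `p_{i+1}`, i.e. `prm 0 = 2`. -/
def prm : ℕ → ℕ
  | 0 => 2
  | k + 1 => nextPrime (prm k)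

/-- Encoding of a configuration as a natural number. -/
def TCM.enc (M : TCM) (C : Config) : ℕ :=
  prm C.1 * prm M.m ^ C.2.1 * prm (M.m + 1) ^ C.2.2.1 * prm (M.m + 2) ^ C.2.2.2

/-- `p = p₁ ⋯ p_{m+3}`. -/
def TCM.p (M : TCM) : ℕ := ∏ i ∈ Finset.range (M.m + 3), prm i

/-- Decode the state from a residue modulo `M.p`. -/
def TCM.stateOf (M : TCM) (i : ℕ) : Option ℕ :=
  (List.range M.m).find? fun s => decide (prm s ∣ i)

/-- The canonical pair `(q_i, r_i)` realizing the prime encoding of the transitions. -/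
def TCM.qr (M : TCM) (i : ℕ) : ℕ × ℕ :=
  match M.stateOf i with
  | none => (1, 1)
  | some s =>
      let b1 : Bool := decide (prm M.m ∣ i)
      let b2 : Bool := decide (prm (M.m + 1) ∣ i)
      match M.step s b1 b2 with
      | none => (1, 1)
      | some (s', d1, d2) =>
          let e1 : ℤ := if b1 then d1 else max d1 0
          let e2 : ℤ := if b2 then d2 else max d2 0
          let num : ℕ := prm s' * prm (M.m + 2) *
            (if e1 = 1 then prm M.m else 1) * (if e2 = 1 then prm (M.m + 1) else 1)
          let den : ℕ := prm s *
            (if e1 = -1 then prm M.m else 1) * (if e2 = -1 then prm (M.m + 1) else 1)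
          (num / Nat.gcd num den, den / Nat.gcd num den)

def TCM.qi (M : TCM) (i : ℕ) : ℕ := (M.qr i).1
def TCM.ri (M : TCM) (i : ℕ) : ℕ := (M.qr i).2

/-- `g(n) = q_{n mod p} · n / r_{n mod p}`. -/
def TCM.g (M : TCM) (n : ℕ) : ℕ := M.qi (n % M.p) * n / M.ri (n % M.p)

/-- `gᵏ(2)`. -/
def TCM.gIter (M : TCM) (k : ℕ) : ℕ := (M.g)^[k] 2

/-- `G = {gᵏ(2) : k ∈ ℕ}`. -/
def TCM.Gset (M : TCM) : Set ℕ := Set.range M.gIter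

/-! ### The rule set `R_M` -/

def pEnd : ℕ := 0
def pFlood : ℕ := 1
def pS0 : ℕ := 2
def pS : ℕ := 3
def pG : ℕ := 4
def pR (i : ℕ) : ℕ := 5 + 2 * i
def pT (i : ℕ) : ℕ := 6 + 2 * i

/-- `j`-th vertex of an `S`-path of length `n` from variable `a` to variable `b`
with fresh intermediate variables `base + 1, …, base + n − 1`. -/
def pathVar (a b base n j : ℕ) : FTerm :=
  if j = 0 then vt a else if j = n then vt b else vt (base + j)

/-- The atoms of `Sⁿ(x_a, x_b)`: an `S`-path of length `n`. -/
def spath (a b base n : ℕ) : Finset Atom :=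
  (Finset.range n).image fun j =>
    (pS, [pathVar a b base n j, pathVar a b base n (j + 1)])

/-- Rule (1): `S₀(x,y) → S(x,y)`. -/
def ruleS : Rule := ({(pS0, [vt 0, vt 1])}, {(pS, [vt 0, vt 1])})

/-- Rule (2): `R_i(x,y) ∧ S(y,z) → R_{i+1}(x,z)` (indices modulo `p`). -/
def ruleR (M : TCM) (i : ℕ) : Rule :=
  ({(pR i, [vt 0, vt 1]), (pS, [vt 1, vt 2])}, {(pR ((i + 1) % M.p), [vt 0, vt 2])})

/-- Rule (3): `T_i(x,y,z) ∧ S^{r_i}(y,y′) ∧ S^{q_i}(z,z′) → T_i(x,y′,z′)`. -/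
def ruleT (M : TCM) (i : ℕ) : Rule :=
  (({(pT i, [vt 0, vt 1, vt 2])} : Finset Atom) ∪ spath 1 3 10 (M.ri i) ∪
      spath 2 4 (11 + M.ri i) (M.qi i),
    {(pT i, [vt 0, vt 3, vt 4])})

/-- Rule (4): `S(x,y) → Flood(y)`. -/
def ruleFloodProp : Rule := ({(pS, [vt 0, vt 1])}, {(pFlood, [vt 1])})

/-- Rule (5): `End(x) → S(x,x)`. -/
def ruleSEnd : Rule := ({(pEnd, [vt 0])}, {(pS, [vt 0, vt 0])})

/-- Rule (6): `S²(x,y) → G(x,y)`. -/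
def ruleGInit : Rule := (spath 0 1 10 2, {(pG, [vt 0, vt 1])})

/-- Rule (7): `G(x,y) ∧ R_i(x,y) ∧ T_i(x,y,z) → G(x,z)`. -/
def ruleGStep (i : ℕ) : Rule :=
  ({(pG, [vt 0, vt 1]), (pR i, [vt 0, vt 1]), (pT i, [vt 0, vt 1, vt 2])},
    {(pG, [vt 0, vt 2])})

/-- Rule (8): `Flood(x) ∧ Flood(y) ∧ Flood(z) → G(x,y) ∧ ⋀_{j<p} (R_j(x,y) ∧ T_j(x,y,z))`. -/
def ruleFloodGen (M : TCM) : Rule :=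
  ({(pFlood, [vt 0]), (pFlood, [vt 1]), (pFlood, [vt 2])},
    ({(pG, [vt 0, vt 1])} : Finset Atom) ∪
      (Finset.range M.p).biUnion fun j =>
        {(pR j, [vt 0, vt 1]), (pT j, [vt 0, vt 1, vt 2])})

/-- Rule (9): `G(y,z) ∧ End(z) → ∃x (S₀(x,y) ∧ R₀(x,x) ∧ ⋀_{j<p} T_j(x,x,x))`. -/
def ruleEx (M : TCM) : Rule :=
  ({(pG, [vt 1, vt 2]), (pEnd, [vt 2])},
    ({(pS0, [vt 0, vt 1]), (pR 0, [vt 0, vt 0])} : Finset Atom) ∪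
      (Finset.range M.p).biUnion fun j => {(pT j, [vt 0, vt 0, vt 0])})

/-- The rule set `R_M`. -/
def RM (M : TCM) : Finset Rule :=
  ({ruleS, ruleFloodProp, ruleSEnd, ruleGInit, ruleFloodGen M, ruleEx M} : Finset Rule) ∪
    (Finset.range M.p).biUnion fun i => {ruleR M i, ruleT M i, ruleGStep i}

/-- The alternating Datalog/non-Datalog chase steps `Step^X_n`. -/
def StepX (X : ChaseVariant) (M : TCM) : ℕ → Set Atom → Set Atom
  | 0, I => ChX X (DatRules (RM M)) I
  | n + 1, I => ChX X (DatRules (RM M)) (ChX X (NDatRules (RM M)) (StepX X M n I))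

/-- The constant `w`, the "well of positivity". -/
def wC : FTerm := ct 0

/-- The instance `{End(w)}`. -/
def IE : Set Atom := {(pEnd, [wC])}

/-- Membership in the signature of `R_M` (predicate together with its arity). -/
def InSig (M : TCM) (a : Atom) : Prop :=
  ((a.1 = pEnd ∨ a.1 = pFlood) ∧ a.2.length = 1) ∨
  ((a.1 = pS0 ∨ a.1 = pS ∨ a.1 = pG ∨ ∃ i < M.p, a.1 = pR i) ∧ a.2.length = 2) ∨
  ((∃ i < M.p, a.1 = pT i) ∧ a.2.length = 3)

/-- The critical instance: all atoms `P(w, …, w)` over the signature of `R_M`. -/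
def Crit (M : TCM) : Set Atom := {a | InSig M a ∧ ∀ t ∈ a.2, t = wC}

/-- An `S`-path of length `k` from `s` to `t` in `J`. -/
def SPath (J : Set Atom) : ℕ → FTerm → FTerm → Prop
  | 0, s, t => s = t
  | k + 1, s, t => ∃ u, (pS, [s, u]) ∈ J ∧ SPath J k u t

/-- The restriction `J|_S`: atoms of `J` all of whose terms belong to `S`. -/
def restrictTo (J : Set Atom) (S : Set FTerm) : Set Atom := {a ∈ J | ∀ t ∈ a.2, t ∈ S}

/-- An explicit injective encoding of three-counter machines by natural numbers. -/
def encodeTCM (M : TCM) : ℕ := Encodable.encode (M.m, M.δ)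
/-! ### A. Primes and machine arithmetic -/

lemma nextPrime_prime (n : ℕ) : (nextPrime n).Prime :=
  (Nat.find_spec (Nat.exists_infinite_primes (n+1))).2

lemma lt_nextPrime (n : ℕ) : n < nextPrime n :=
  (Nat.find_spec (Nat.exists_infinite_primes (n+1))).1

lemma prm_prime (k : ℕ) : (prm k).Prime := by
  cases k with
  | zero => exact Nat.prime_two
  | succ k => exact nextPrime_prime _

lemma prm_lt_succ (k : ℕ) : prm k < prm (k+1) := lt_nextPrime _
lemma prm_strictMono : StrictMono prm := strictMono_nat_of_lt_succ prm_lt_succ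
lemma prm_injective : Function.Injective prm := prm_strictMono.injective
lemma prm_pos (k : ℕ) : 0 < prm k := (prm_prime k).pos
lemma prm_two_le (k : ℕ) : 2 ≤ prm k := (prm_prime k).two_le

lemma prm_dvd_prm_iff {j k : ℕ} : prm j ∣ prm k ↔ j = k := by
  rw [Nat.prime_dvd_prime_iff_eq (prm_prime j) (prm_prime k)]
  exact ⟨fun h => prm_injective h, fun h => by rw [h]⟩

lemma prm_dvd_pow_iff {j k c : ℕ} : prm j ∣ prm k ^ c ↔ (j = k ∧ c ≠ 0) := by
  constructor
  · intro h
    have hc : c ≠ 0 := by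
      rintro rfl
      simp only [pow_zero, Nat.dvd_one] at h
      have := prm_two_le j; omega
    exact ⟨prm_dvd_prm_iff.1 ((prm_prime j).dvd_of_dvd_pow h), hc⟩
  · rintro ⟨rfl, hc⟩
    exact dvd_pow_self _ hc

lemma enc_eq (M : TCM) (q c1 c2 tm : ℕ) :
    M.enc (q, c1, c2, tm) = prm q * prm M.m ^ c1 * prm (M.m+1) ^ c2 * prm (M.m+2) ^ tm := rfl

lemma prm_dvd_enc_iff (M : TCM) {j q c1 c2 tm : ℕ} :
    prm j ∣ M.enc (q, c1, c2, tm) ↔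
      (j = q ∨ (j = M.m ∧ c1 ≠ 0) ∨ (j = M.m + 1 ∧ c2 ≠ 0) ∨ (j = M.m + 2 ∧ tm ≠ 0)) := by
  rw [enc_eq, (prm_prime j).dvd_mul, (prm_prime j).dvd_mul, (prm_prime j).dvd_mul,
    prm_dvd_prm_iff, prm_dvd_pow_iff, prm_dvd_pow_iff, prm_dvd_pow_iff]
  tauto

lemma prm_dvd_p (M : TCM) {j : ℕ} (h : j < M.m + 3) : prm j ∣ M.p :=
  Finset.dvd_prod_of_mem _ (Finset.mem_range.2 h)

lemma p_pos (M : TCM) : 0 < M.p := Finset.prod_pos (fun i _ => prm_pos i)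

lemma prm_dvd_mod_p (M : TCM) {j n : ℕ} (h : j < M.m + 3) : prm j ∣ n % M.p ↔ prm j ∣ n :=
  Nat.dvd_mod_iff (prm_dvd_p M h)

lemma find?_eq_some_of_unique {l : List ℕ} {pr : ℕ → Bool} {q : ℕ}
    (hq : q ∈ l) (h1 : pr q = true) (h2 : ∀ s ∈ l, pr s = true → s = q) :
    l.find? pr = some q := by
  have h3 : (l.find? pr).isSome := List.find?_isSome.2 ⟨q, hq, h1⟩
  obtain ⟨x, hx⟩ := Option.isSome_iff_exists.1 h3
  rw [hx, h2 x (List.mem_of_find?_eq_some hx) (List.find?_some hx)]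

lemma step_wf (M : TCM) {q : ℕ} {b1 b2 : Bool} {q' : ℕ} {d1 d2 : ℤ}
    (h : M.step q b1 b2 = some (q', d1, d2)) :
    q' < M.m ∧ d1.natAbs ≤ 1 ∧ d2.natAbs ≤ 1 := by
  unfold TCM.step at h
  cases hf : M.δ.find? (fun e => decide (e.1 = (q, b1, b2))) with
  | none => rw [hf] at h; simp at h
  | some e =>
    rw [hf] at h
    simp only [Option.map_some, Option.some.injEq] at h
    have hw := M.wf e (List.mem_of_find?_eq_some hf)
    rw [h] at hw
    exact ⟨hw.2.1, hw.2.2.1, hw.2.2.2⟩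

/-- per-counter identity -/
lemma counter_identity {P : ℕ} (hP : 2 ≤ P) (c : ℕ) (d : ℤ) (hd : d.natAbs ≤ 1) :
    (if (if decide (c ≠ 0) = true then d else max d 0) = 1 then P else 1) * P ^ c
      = (if (if decide (c ≠ 0) = true then d else max d 0) = -1 then P else 1) *
          P ^ (((c : ℤ) + d).toNat) ∧
    (if (if decide (c ≠ 0) = true then d else max d 0) = -1 then P else 1) ∣ P ^ c := by
  simp only [decide_eq_true_eq]
  have hd' : d = -1 ∨ d = 0 ∨ d = 1 := by omega
  have h00 : ((-1 : ℤ)).toNat = 0 := rfl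
  rcases hd' with rfl | rfl | rfl
  · by_cases hc : c = 0
    · subst hc
      have h0 : ((0:ℕ):ℤ) + -1 = -1 := by norm_num
      norm_num [h0, h00]
    · obtain ⟨c', rfl⟩ : ∃ c', c = c' + 1 := ⟨c - 1, by omega⟩
      have h1 : (((c' + 1 : ℕ) : ℤ) + -1).toNat = c' := by omega
      norm_num [h1, pow_succ]
      ring
  · by_cases hc : c = 0 <;> norm_num [hc]
  · by_cases hc : c = 0
    · subst hc
      norm_num
    · have h1 : (((c : ℕ) : ℤ) + 1).toNat = c + 1 := by omega
      norm_num [hc, h1, pow_succ]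
      ring
lemma qr_eq (M : TCM) {i s : ℕ} {q' : ℕ} {d1 d2 : ℤ} (hs : M.stateOf i = some s)
    (hstep : M.step s (decide (prm M.m ∣ i)) (decide (prm (M.m+1) ∣ i)) = some (q', d1, d2)) :
    M.qr i =
      (let e1 : ℤ := if (decide (prm M.m ∣ i) : Bool) then d1 else max d1 0
       let e2 : ℤ := if (decide (prm (M.m+1) ∣ i) : Bool) then d2 else max d2 0
       let num : ℕ := prm q' * prm (M.m + 2) *
         (if e1 = 1 then prm M.m else 1) * (if e2 = 1 then prm (M.m+1) else 1)
       let den : ℕ := prm s *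
         (if e1 = -1 then prm M.m else 1) * (if e2 = -1 then prm (M.m+1) else 1)
       (num / Nat.gcd num den, den / Nat.gcd num den)) := by
  unfold TCM.qr
  rw [hs]
  simp only [hstep]

lemma div_gcd_calc {num den n n' : ℕ} (hnum : 0 < num) (hden : 0 < den)
    (hdvd : den ∣ n) (heq : num * n = den * n') :
    den / Nat.gcd num den ∣ n ∧ (num / Nat.gcd num den) * n / (den / Nat.gcd num den) = n' := by
  set g := Nat.gcd num den with hg
  have hgnum : g ∣ num := Nat.gcd_dvd_left _ _
  have hgden : g ∣ den := Nat.gcd_dvd_right _ _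
  have hgpos : 0 < g := Nat.gcd_pos_of_pos_left _ hnum
  have hQ : num / g * g = num := Nat.div_mul_cancel hgnum
  have hR : den / g * g = den := Nat.div_mul_cancel hgden
  have hRpos : 0 < den / g := Nat.div_pos (Nat.le_of_dvd hden hgden) hgpos
  have hRdvdden : den / g ∣ den := ⟨g, hR.symm⟩
  constructor
  · exact hRdvdden.trans hdvd
  · have hkey : num / g * n = den / g * n' := by
      apply Nat.eq_of_mul_eq_mul_right hgpos
      calc num / g * n * g = num / g * g * n := by ring
        _ = num * n := by rw [hQ]
        _ = den * n' := heq
        _ = den / g * g * n' := by rw [hR]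
        _ = den / g * n' * g := by ring
    rw [hkey, Nat.mul_div_cancel_left _ hRpos]
lemma TCM.key (M : TCM) {q c1 c2 tm : ℕ} {C' : Config}
    (hq : q < M.m) (hnext : M.next (q, c1, c2, tm) = some C') :
    M.ri (M.enc (q, c1, c2, tm) % M.p) ∣ M.enc (q, c1, c2, tm) ∧
      M.g (M.enc (q, c1, c2, tm)) = M.enc C' := by
  set n := M.enc (q, c1, c2, tm) with hn
  set i := n % M.p with hi
  obtain ⟨q', d1, d2, hstep, hC'⟩ :
      ∃ q' d1 d2, M.step q (decide (c1 ≠ 0)) (decide (c2 ≠ 0)) = some (q', d1, d2) ∧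
        C' = (q', ((c1 : ℤ) + d1).toNat, ((c2 : ℤ) + d2).toNat, tm + 1) := by
    unfold TCM.next at hnext
    cases hs : M.step q (decide (c1 ≠ 0)) (decide (c2 ≠ 0)) with
    | none => rw [hs] at hnext; simp at hnext
    | some v =>
      obtain ⟨q', d1, d2⟩ := v
      rw [hs] at hnext
      simp only [Option.some.injEq] at hnext
      exact ⟨q', d1, d2, rfl, hnext.symm⟩
  obtain ⟨hq', hd1, hd2⟩ := step_wf M hstep
  have hdvd_iff : ∀ j, j < M.m + 3 → (prm j ∣ i ↔ prm j ∣ n) :=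
    fun j hj => prm_dvd_mod_p M hj
  have hmq : ∀ s, s < M.m → (prm s ∣ n ↔ s = q) := by
    intro s hs
    rw [hn, prm_dvd_enc_iff]
    constructor
    · rintro (h | ⟨h, _⟩ | ⟨h, _⟩ | ⟨h, _⟩) <;> omega
    · intro h; left; exact h
  have hstate : M.stateOf i = some q := by
    unfold TCM.stateOf
    apply find?_eq_some_of_unique
    · exact List.mem_range.2 hq
    · rw [decide_eq_true_eq, hdvd_iff q (by omega), hmq q hq]
    · intro s hs hps
      rw [decide_eq_true_eq, hdvd_iff s (by have := List.mem_range.1 hs; omega),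
        hmq s (List.mem_range.1 hs)] at hps
      exact hps
  have hP1 : (prm M.m ∣ i) = (c1 ≠ 0) := by
    apply propext
    rw [hdvd_iff M.m (by omega), hn, prm_dvd_enc_iff]
    constructor
    · rintro (h | ⟨_, h⟩ | ⟨h, _⟩ | ⟨h, _⟩) <;> omega
    · intro h; right; left; exact ⟨rfl, h⟩
  have hP2 : (prm (M.m + 1) ∣ i) = (c2 ≠ 0) := by
    apply propext
    rw [hdvd_iff (M.m + 1) (by omega), hn, prm_dvd_enc_iff]
    constructor
    · rintro (h | ⟨h, _⟩ | ⟨_, h⟩ | ⟨h, _⟩) <;> omega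
    · intro h; right; right; left; exact ⟨rfl, h⟩
  have hb1 : (decide (prm M.m ∣ i) : Bool) = decide (c1 ≠ 0) :=
    decide_eq_decide.2 (by rw [hP1])
  have hb2 : (decide (prm (M.m+1) ∣ i) : Bool) = decide (c2 ≠ 0) :=
    decide_eq_decide.2 (by rw [hP2])
  have hqr := qr_eq M hstate (by rw [hb1, hb2]; exact hstep)
  rw [hb1, hb2] at hqr
  simp only [] at hqr
  obtain ⟨I1eq, D1dvd⟩ := counter_identity (prm_two_le M.m) c1 d1 hd1 (P := prm M.m)
  obtain ⟨I2eq, D2dvd⟩ := counter_identity (prm_two_le (M.m+1)) c2 d2 hd2 (P := prm (M.m+1))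
  have num_pos : 0 < prm q' * prm (M.m + 2) *
      (if (if decide (c1 ≠ 0) = true then d1 else max d1 0) = 1 then prm M.m else 1) *
      (if (if decide (c2 ≠ 0) = true then d2 else max d2 0) = 1 then prm (M.m+1) else 1) := by
    apply Nat.mul_pos
    apply Nat.mul_pos
    exact Nat.mul_pos (prm_pos _) (prm_pos _)
    all_goals split_ifs <;> first | exact prm_pos _ | exact Nat.one_pos
  have den_pos : 0 < prm q *
      (if (if decide (c1 ≠ 0) = true then d1 else max d1 0) = -1 then prm M.m else 1) *
      (if (if decide (c2 ≠ 0) = true then d2 else max d2 0) = -1 then prm (M.m+1) else 1) := by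
    apply Nat.mul_pos
    apply Nat.mul_pos
    exact prm_pos _
    all_goals split_ifs <;> first | exact prm_pos _ | exact Nat.one_pos
  have hC'enc : M.enc C' = prm q' * prm M.m ^ ((c1:ℤ)+d1).toNat *
      prm (M.m+1) ^ ((c2:ℤ)+d2).toNat * prm (M.m+2) ^ (tm+1) := by
    rw [hC']; rfl
  have heq : (prm q' * prm (M.m + 2) *
      (if (if decide (c1 ≠ 0) = true then d1 else max d1 0) = 1 then prm M.m else 1) *
      (if (if decide (c2 ≠ 0) = true then d2 else max d2 0) = 1 then prm (M.m+1) else 1)) * n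
      = (prm q *
      (if (if decide (c1 ≠ 0) = true then d1 else max d1 0) = -1 then prm M.m else 1) *
      (if (if decide (c2 ≠ 0) = true then d2 else max d2 0) = -1 then prm (M.m+1) else 1)) *
        M.enc C' := by
    rw [hC'enc, hn, enc_eq]
    calc (prm q' * prm (M.m + 2) *
      (if (if decide (c1 ≠ 0) = true then d1 else max d1 0) = 1 then prm M.m else 1) *
      (if (if decide (c2 ≠ 0) = true then d2 else max d2 0) = 1 then prm (M.m+1) else 1)) *
        (prm q * prm M.m ^ c1 * prm (M.m+1) ^ c2 * prm (M.m+2) ^ tm)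
        = ((if (if decide (c1 ≠ 0) = true then d1 else max d1 0) = 1 then prm M.m else 1) *
            prm M.m ^ c1) *
          (((if (if decide (c2 ≠ 0) = true then d2 else max d2 0) = 1 then prm (M.m+1) else 1) *
            prm (M.m+1) ^ c2) *
           (prm q' * (prm (M.m+2) ^ tm * prm (M.m+2)) * prm q)) := by ring
      _ = ((if (if decide (c1 ≠ 0) = true then d1 else max d1 0) = -1 then prm M.m else 1) *
            prm M.m ^ ((c1:ℤ)+d1).toNat) *
          (((if (if decide (c2 ≠ 0) = true then d2 else max d2 0) = -1 then prm (M.m+1) else 1) *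
            prm (M.m+1) ^ ((c2:ℤ)+d2).toNat) *
           (prm q' * (prm (M.m+2) ^ tm * prm (M.m+2)) * prm q)) := by rw [I1eq, I2eq]
      _ = _ := by rw [pow_succ]; ring
  have hdvd : (prm q *
      (if (if decide (c1 ≠ 0) = true then d1 else max d1 0) = -1 then prm M.m else 1) *
      (if (if decide (c2 ≠ 0) = true then d2 else max d2 0) = -1 then prm (M.m+1) else 1)) ∣ n := by
    rw [hn, enc_eq]
    exact dvd_mul_of_dvd_left (mul_dvd_mul (mul_dvd_mul dvd_rfl D1dvd) D2dvd) _
  have hgoal := div_gcd_calc num_pos den_pos hdvd heq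
  constructor
  · rw [TCM.ri, hqr]
    exact hgoal.1
  · rw [TCM.g, TCM.qi, TCM.ri, ← hi, hqr]
    exact hgoal.2
lemma run_state_lt (M : TCM) : ∀ n C, M.run n = some C → C.1 < M.m := by
  intro n
  induction n with
  | zero => intro C hC; simp [TCM.run] at hC; rw [← hC]; exact M.hm
  | succ n ih =>
    intro C hC
    rw [TCM.run, Option.bind_eq_some_iff] at hC
    obtain ⟨B, hB, hBC⟩ := hC
    unfold TCM.next at hBC
    cases hs : M.step B.1 (decide (B.2.1 ≠ 0)) (decide (B.2.2.1 ≠ 0)) with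
    | none => rw [hs] at hBC; simp at hBC
    | some v =>
      obtain ⟨q', d1, d2⟩ := v
      rw [hs] at hBC
      simp only [Option.some.injEq] at hBC
      rw [← hBC]
      exact (step_wf M hs).1

lemma run_time (M : TCM) : ∀ n C, M.run n = some C → C.2.2.2 = n := by
  intro n
  induction n with
  | zero => intro C hC; simp [TCM.run] at hC; rw [← hC]
  | succ n ih =>
    intro C hC
    rw [TCM.run, Option.bind_eq_some_iff] at hC
    obtain ⟨B, hB, hBC⟩ := hC
    unfold TCM.next at hBC
    cases hs : M.step B.1 (decide (B.2.1 ≠ 0)) (decide (B.2.2.1 ≠ 0)) with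
    | none => rw [hs] at hBC; simp at hBC
    | some v =>
      obtain ⟨q', d1, d2⟩ := v
      rw [hs] at hBC
      simp only [Option.some.injEq] at hBC
      rw [← hBC]
      simp [ih B hB]

lemma run_total (M : TCM) (hM : ¬ M.Halts) : ∀ n, ∃ C, M.run n = some C := by
  intro n
  induction n with
  | zero => exact ⟨(0,0,0,0), rfl⟩
  | succ n ih =>
    obtain ⟨C, hC⟩ := ih
    cases hnx : M.next C with
    | none => exact absurd ⟨n, C, hC, hnx⟩ hM
    | some C' =>
      refine ⟨C', ?_⟩
      rw [TCM.run, hC, Option.bind_eq_some_iff]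
      exact ⟨C, rfl, hnx⟩

lemma gIter_eq_enc (M : TCM) (hM : ¬ M.Halts) :
    ∀ t C, M.run t = some C → M.gIter t = M.enc C := by
  intro t
  induction t with
  | zero =>
    intro C hC
    simp [TCM.run] at hC
    rw [← hC, TCM.gIter, TCM.enc]
    simp [prm]
  | succ t ih =>
    intro C hC
    rw [TCM.run, Option.bind_eq_some_iff] at hC
    obtain ⟨B, hB, hBC⟩ := hC
    obtain ⟨q, c1, c2, tm⟩ := B
    have hgi : M.gIter (t+1) = M.g (M.gIter t) := Function.iterate_succ_apply' _ _ _
    rw [hgi, ih _ hB]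
    exact (TCM.key M (run_state_lt M t _ hB) hBC).2

lemma gIter_ge (M : TCM) (hM : ¬ M.Halts) (t : ℕ) : 2 ^ t ≤ M.gIter t := by
  obtain ⟨C, hC⟩ := run_total M hM t
  obtain ⟨q, c1, c2, tm⟩ := C
  have htm : tm = t := run_time M t _ hC
  rw [gIter_eq_enc M hM t _ hC, enc_eq]
  subst htm
  calc 2 ^ tm ≤ prm (M.m+2) ^ tm := Nat.pow_le_pow_left (prm_two_le _) _
    _ ≤ _ := Nat.le_mul_of_pos_left _
        (Nat.mul_pos (Nat.mul_pos (prm_pos _) (Nat.pow_pos (prm_pos _)))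
          (Nat.pow_pos (prm_pos _)))

/-- The two facts needed for the simulation: along the orbit, division is exact. -/
lemma gIter_step (M : TCM) (hM : ¬ M.Halts) (t : ℕ) :
    M.ri (M.gIter t % M.p) ∣ M.gIter t ∧ M.g (M.gIter t) = M.gIter (t+1) := by
  obtain ⟨C, hC⟩ := run_total M hM t
  obtain ⟨C', hC'⟩ := run_total M hM (t+1)
  rw [TCM.run, hC, Option.bind_eq_some_iff] at hC'
  obtain ⟨B, hB, hBC⟩ := hC'
  rw [Option.some_inj] at hB
  subst hB
  obtain ⟨q, c1, c2, tm⟩ := C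
  have hkey := TCM.key M (run_state_lt M t _ hC) hBC
  have henc := gIter_eq_enc M hM t _ hC
  constructor
  · rw [henc]; exact hkey.1
  · rw [henc, hkey.2, gIter_eq_enc M hM (t+1) C']
    rw [TCM.run, hC, Option.bind_eq_some_iff]
    exact ⟨_, rfl, hBC⟩

lemma qi_pos (M : TCM) (i : ℕ) : 0 < M.qi i ∧ 0 < M.ri i := by
  rw [TCM.qi, TCM.ri]
  unfold TCM.qr
  split
  · exact ⟨Nat.one_pos, Nat.one_pos⟩
  · simp only []
    split
    · exact ⟨Nat.one_pos, Nat.one_pos⟩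
    · rename_i x1 s hs x2 s' d1 d2 hst
      simp only []
      have hnum : 0 < prm s' * prm (M.m + 2) *
          (if (if decide (prm M.m ∣ i) = true then d1 else max d1 0) = 1 then prm M.m else 1) *
          (if (if decide (prm (M.m+1) ∣ i) = true then d2 else max d2 0) = 1
            then prm (M.m+1) else 1) := by
        apply Nat.mul_pos
        apply Nat.mul_pos
        exact Nat.mul_pos (prm_pos _) (prm_pos _)
        all_goals split_ifs <;> first | exact prm_pos _ | exact Nat.one_pos
      have hden : 0 < prm s *
          (if (if decide (prm M.m ∣ i) = true then d1 else max d1 0) = -1 then prm M.m else 1) *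
          (if (if decide (prm (M.m+1) ∣ i) = true then d2 else max d2 0) = -1
            then prm (M.m+1) else 1) := by
        apply Nat.mul_pos
        apply Nat.mul_pos
        exact prm_pos _
        all_goals split_ifs <;> first | exact prm_pos _ | exact Nat.one_pos
      exact ⟨Nat.div_pos (Nat.le_of_dvd hnum (Nat.gcd_dvd_left _ _))
          (Nat.gcd_pos_of_pos_left _ hnum),
        Nat.div_pos (Nat.le_of_dvd hden (Nat.gcd_dvd_right _ _))
          (Nat.gcd_pos_of_pos_left _ hnum)⟩
/-! ### E. chase basics -/

lemma instSeq_mono (I : Set Atom) (st : ℕ → Option Trigger) :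
    Monotone (instSeq I st) := by
  apply monotone_nat_of_le_succ
  intro n
  rw [instSeq]
  exact Set.subset_union_left

lemma Deriv.inst_mono {Rset : Finset Rule} {I : Set Atom} (D : Deriv Rset I) {a b : ℕ}
    (h : a ≤ b) : D.inst a ⊆ D.inst b := instSeq_mono I D.steps h

lemma Deriv.inst_subset_res {Rset : Finset Rule} {I : Set Atom} (D : Deriv Rset I) (n : ℕ) :
    D.inst n ⊆ D.res := Set.subset_iUnion (fun n => D.inst n) n

lemma finset_subset_inst {Rset : Finset Rule} {I : Set Atom} (D : Deriv Rset I) (A : Finset Atom)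
    (h : ∀ a ∈ A, a ∈ D.res) : ∃ n, ∀ a ∈ A, a ∈ D.inst n := by
  induction A using Finset.induction_on with
  | empty => exact ⟨0, by simp⟩
  | @insert a A' ha ih =>
    obtain ⟨n, hn⟩ := ih (fun x hx => h x (Finset.mem_insert_of_mem hx))
    obtain ⟨m, hm⟩ := Set.mem_iUnion.1 (h a (Finset.mem_insert_self _ _))
    refine ⟨max n m, fun x hx => ?_⟩
    rcases Finset.mem_insert.1 hx with rfl | hx
    · exact D.inst_mono (le_max_right n m) hm
    · exact D.inst_mono (le_max_left n m) (hn x hx)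

/-! ### chase elements -/

def wit (M : TCM) (y : FTerm) : FTerm :=
  Sum.inr (Sum.inr (Encodable.encode ((ruleEx M),
    ({(Sum.inl 1, y), (Sum.inl 2, wC)} : Finset (Var × FTerm))),
    Encodable.encode (Sum.inl 0 : Var)))

def eSeq (M : TCM) : ℕ → FTerm
  | 0 => wC
  | k + 1 => wit M (eSeq M k)

lemma wit_ne_w (M : TCM) (y : FTerm) : wit M y ≠ wC := by simp [wit, wC, ct]

lemma wit_injective (M : TCM) : Function.Injective (wit M) := by
  intro y y' h
  simp only [wit, Sum.inr.injEq, Prod.mk.injEq] at h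
  have h2 := Encodable.encode_injective h.1
  rw [Prod.mk.injEq] at h2
  have h3 : (Sum.inl 1 (β := ℕ × ℕ), y) ∈
      ({(Sum.inl 1, y'), (Sum.inl 2, wC)} : Finset (Var × FTerm)) := by
    rw [← h2.2]
    simp
  rcases Finset.mem_insert.1 h3 with h4 | h4
  · rw [Prod.mk.injEq] at h4
    exact h4.2
  · exfalso
    rw [Finset.mem_singleton, Prod.mk.injEq] at h4
    simpa using h4.1

lemma eSeq_injective (M : TCM) : Function.Injective (eSeq M) := by
  intro a
  induction a with
  | zero =>
    intro b h
    cases b with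
    | zero => rfl
    | succ b => exact absurd h.symm (wit_ne_w M _)
  | succ a ih =>
    intro b h
    cases b with
    | zero => exact absurd h (wit_ne_w M _)
    | succ b => rw [ih (wit_injective M h)]

/-! ### variables -/

lemma mem_atomVarsF {a : Atom} {v : Var} : v ∈ atomVarsF a ↔ Sum.inr v ∈ a.2 := by
  simp only [atomVarsF, List.mem_toFinset, List.mem_filterMap]
  constructor
  · rintro ⟨t, ht, h⟩
    cases t with
    | inl c => simp [Sum.getRight?] at h
    | inr u =>
      simp only [Sum.getRight?, Option.some.injEq] at h
      rw [← h]
      exact ht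
  · intro h
    exact ⟨Sum.inr v, h, rfl⟩

lemma mem_varsF {A : Finset Atom} {v : Var} : v ∈ varsF A ↔ ∃ a ∈ A, Sum.inr v ∈ a.2 := by
  simp [varsF, mem_atomVarsF]

lemma sub_mem_adom {J : Set Atom} {t : Trigger} (hOn : t.isOn J) {v : Var}
    (hv : v ∈ varsF t.rule.1) : t.sub v ∈ adom J := by
  obtain ⟨a, ha, hva⟩ := mem_varsF.1 hv
  refine ⟨applyA t.sub a, hOn a ha, ?_⟩
  simpa only [applyA, applyT] using List.mem_map_of_mem (f := applyT t.sub) hva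

lemma extSub_of_mem {t : Trigger} {v : Var} (hv : v ∈ varsF t.rule.1) :
    t.extSub v = t.sub v := if_pos hv

lemma extSub_of_not_mem {t : Trigger} {v : Var} (hv : ¬ v ∈ varsF t.rule.1) :
    t.extSub v = Sum.inr (Sum.inr (t.code, Encodable.encode v)) := if_neg hv
/-! ### F. rule bookkeeping -/

lemma pathVar_zero (a b base n : ℕ) : pathVar a b base n 0 = vt a := if_pos rfl

lemma pathVar_last (a b base : ℕ) {n : ℕ} (hn : n ≠ 0) : pathVar a b base n n = vt b := by
  rw [pathVar, if_neg hn, if_pos rfl]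

lemma pathVar_mid (a b base : ℕ) {n j : ℕ} (h0 : j ≠ 0) (hn : j ≠ n) :
    pathVar a b base n j = vt (base + j) := by
  rw [pathVar, if_neg h0, if_neg hn]

lemma mem_spath_intro {a b base n : ℕ} {j : ℕ} (hj : j < n) :
    (pS, [pathVar a b base n j, pathVar a b base n (j+1)]) ∈ spath a b base n :=
  Finset.mem_image_of_mem _ (Finset.mem_range.2 hj)

lemma mem_spath_elim {a b base n : ℕ} {x : Atom} (hx : x ∈ spath a b base n) :
    ∃ j < n, x = (pS, [pathVar a b base n j, pathVar a b base n (j+1)]) := by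
  obtain ⟨j, hj, hjx⟩ := Finset.mem_image.1 hx
  exact ⟨j, Finset.mem_range.1 hj, hjx.symm⟩

lemma inla_mem_spath {a b base n : ℕ} (hn : 0 < n) :
    Sum.inl a ∈ varsF (spath a b base n) := by
  rw [mem_varsF]
  refine ⟨_, mem_spath_intro hn, ?_⟩
  rw [pathVar_zero]
  exact List.mem_cons_self

lemma inlb_mem_spath {a b base n : ℕ} (hn : 0 < n) :
    Sum.inl b ∈ varsF (spath a b base n) := by
  rw [mem_varsF]
  refine ⟨_, mem_spath_intro (Nat.sub_lt hn Nat.one_pos), ?_⟩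
  rw [Nat.sub_add_cancel hn, pathVar_last a b base (by omega)]
  simp [vt]

/-- membership of rules in RM -/
lemma ruleS_mem (M : TCM) : ruleS ∈ RM M := by simp [RM]
lemma ruleFloodProp_mem (M : TCM) : ruleFloodProp ∈ RM M := by simp [RM]
lemma ruleSEnd_mem (M : TCM) : ruleSEnd ∈ RM M := by simp [RM]
lemma ruleGInit_mem (M : TCM) : ruleGInit ∈ RM M := by simp [RM]
lemma ruleFloodGen_mem (M : TCM) : ruleFloodGen M ∈ RM M := by simp [RM]
lemma ruleEx_mem (M : TCM) : ruleEx M ∈ RM M := by simp [RM]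
lemma ruleR_mem (M : TCM) {i : ℕ} (hi : i < M.p) : ruleR M i ∈ RM M := by
  simp only [RM, Finset.mem_union, Finset.mem_biUnion, Finset.mem_range]
  exact Or.inr ⟨i, hi, by simp⟩
lemma ruleT_mem (M : TCM) {i : ℕ} (hi : i < M.p) : ruleT M i ∈ RM M := by
  simp only [RM, Finset.mem_union, Finset.mem_biUnion, Finset.mem_range]
  exact Or.inr ⟨i, hi, by simp⟩
lemma ruleGStep_mem (M : TCM) {i : ℕ} (hi : i < M.p) : ruleGStep i ∈ RM M := by
  simp only [RM, Finset.mem_union, Finset.mem_biUnion, Finset.mem_range]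
  exact Or.inr ⟨i, hi, by simp⟩

lemma mem_RM {M : TCM} {R : Rule} (h : R ∈ RM M) :
    R = ruleS ∨ R = ruleFloodProp ∨ R = ruleSEnd ∨ R = ruleGInit ∨ R = ruleFloodGen M ∨
    R = ruleEx M ∨ ∃ i < M.p, (R = ruleR M i ∨ R = ruleT M i ∨ R = ruleGStep i) := by
  simp only [RM, Finset.mem_union, Finset.mem_insert, Finset.mem_singleton,
    Finset.mem_biUnion, Finset.mem_range] at h
  rcases h with h | ⟨i, hi, h⟩
  · tauto
  · exact Or.inr (Or.inr (Or.inr (Or.inr (Or.inr (Or.inr ⟨i, hi, by tauto⟩)))))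

/-- Datalog property of the rules -/
lemma dl_ruleS : varsF ruleS.2 ⊆ varsF ruleS.1 := by
  intro v hv
  rw [mem_varsF] at hv ⊢
  simp only [ruleS, Finset.mem_singleton] at hv ⊢
  obtain ⟨a, rfl, hva⟩ := hv
  exact ⟨_, rfl, by simpa using hva⟩

lemma dl_ruleFloodProp : varsF ruleFloodProp.2 ⊆ varsF ruleFloodProp.1 := by
  intro v hv
  rw [mem_varsF] at hv ⊢
  simp only [ruleFloodProp, Finset.mem_singleton] at hv ⊢
  obtain ⟨a, rfl, hva⟩ := hv
  simp only [List.mem_singleton] at hva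
  exact ⟨_, rfl, by simp [hva]⟩

lemma dl_ruleSEnd : varsF ruleSEnd.2 ⊆ varsF ruleSEnd.1 := by
  intro v hv
  rw [mem_varsF] at hv ⊢
  simp only [ruleSEnd, Finset.mem_singleton] at hv ⊢
  obtain ⟨a, rfl, hva⟩ := hv
  simp only [List.mem_cons, List.mem_singleton, List.not_mem_nil, or_false] at hva
  rcases hva with h | h <;> exact ⟨_, rfl, by simp [h]⟩

lemma dl_ruleGInit : varsF ruleGInit.2 ⊆ varsF ruleGInit.1 := by
  intro v hv
  rw [mem_varsF] at hv
  simp only [ruleGInit, Finset.mem_singleton] at hv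
  obtain ⟨a, rfl, hva⟩ := hv
  simp only [List.mem_cons, List.mem_singleton, List.not_mem_nil, or_false, vt] at hva
  rcases hva with h | h
  · obtain rfl : v = Sum.inl 0 := by simpa using h
    exact inla_mem_spath (by norm_num)
  · obtain rfl : v = Sum.inl 1 := by simpa using h
    exact inlb_mem_spath (by norm_num)

lemma dl_ruleR (M : TCM) (i : ℕ) : varsF (ruleR M i).2 ⊆ varsF (ruleR M i).1 := by
  intro v hv
  rw [mem_varsF] at hv ⊢
  simp only [ruleR, Finset.mem_singleton] at hv
  obtain ⟨a, rfl, hva⟩ := hv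
  simp only [List.mem_cons, List.mem_singleton, List.not_mem_nil, or_false, vt] at hva
  rcases hva with h | h
  · obtain rfl : v = Sum.inl 0 := by simpa using h
    exact ⟨(pR i, [vt 0, vt 1]), by simp [ruleR], by simp [vt]⟩
  · obtain rfl : v = Sum.inl 2 := by simpa using h
    exact ⟨(pS, [vt 1, vt 2]), by simp [ruleR], by simp [vt]⟩

lemma dl_ruleGStep (i : ℕ) : varsF (ruleGStep i).2 ⊆ varsF (ruleGStep i).1 := by
  intro v hv
  rw [mem_varsF] at hv ⊢
  simp only [ruleGStep, Finset.mem_singleton] at hv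
  obtain ⟨a, rfl, hva⟩ := hv
  simp only [List.mem_cons, List.mem_singleton, List.not_mem_nil, or_false, vt] at hva
  rcases hva with h | h
  · obtain rfl : v = Sum.inl 0 := by simpa using h
    exact ⟨(pG, [vt 0, vt 1]), by simp [ruleGStep], by simp [vt]⟩
  · obtain rfl : v = Sum.inl 2 := by simpa using h
    exact ⟨(pT i, [vt 0, vt 1, vt 2]), by simp [ruleGStep], by simp [vt]⟩

lemma dl_ruleFloodGen (M : TCM) : varsF (ruleFloodGen M).2 ⊆ varsF (ruleFloodGen M).1 := by
  intro v hv
  rw [mem_varsF] at hv ⊢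
  simp only [ruleFloodGen, Finset.mem_union, Finset.mem_singleton, Finset.mem_biUnion,
    Finset.mem_range, Finset.mem_insert] at hv
  obtain ⟨a, ha, hva⟩ := hv
  have hv3 : v = Sum.inl 0 ∨ v = Sum.inl 1 ∨ v = Sum.inl 2 := by
    rcases ha with rfl | ⟨j, hj, rfl | rfl⟩
    · simp only [List.mem_cons, List.mem_singleton, List.not_mem_nil, or_false, vt] at hva
      rcases hva with h | h
      · left; simpa using h
      · right; left; simpa using h
    · simp only [List.mem_cons, List.mem_singleton, List.not_mem_nil, or_false, vt] at hva
      rcases hva with h | h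
      · left; simpa using h
      · right; left; simpa using h
    · simp only [List.mem_cons, List.mem_singleton, List.not_mem_nil, or_false, vt] at hva
      rcases hva with h | h | h
      · left; simpa using h
      · right; left; simpa using h
      · right; right; simpa using h
  rcases hv3 with rfl | rfl | rfl
  · exact ⟨(pFlood, [vt 0]), by simp [ruleFloodGen], by simp [vt]⟩
  · exact ⟨(pFlood, [vt 1]), by simp [ruleFloodGen], by simp [vt]⟩
  · exact ⟨(pFlood, [vt 2]), by simp [ruleFloodGen], by simp [vt]⟩

lemma dl_ruleT (M : TCM) (i : ℕ) : varsF (ruleT M i).2 ⊆ varsF (ruleT M i).1 := by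
  intro v hv
  rw [mem_varsF] at hv
  simp only [ruleT, Finset.mem_singleton] at hv
  obtain ⟨a, rfl, hva⟩ := hv
  simp only [List.mem_cons, List.mem_singleton, List.not_mem_nil, or_false, vt] at hva
  have hri : 0 < M.ri i := (qi_pos M i).2
  have hqi : 0 < M.qi i := (qi_pos M i).1
  rcases hva with h | h | h
  · obtain rfl : v = Sum.inl 0 := by simpa using h
    rw [mem_varsF]
    exact ⟨(pT i, [vt 0, vt 1, vt 2]), by simp [ruleT], by simp [vt]⟩
  · obtain rfl : v = Sum.inl 3 := by simpa using h
    have := inlb_mem_spath (a := 1) (b := 3) (base := 10) hri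
    rw [mem_varsF] at this ⊢
    obtain ⟨x, hx, hvx⟩ := this
    exact ⟨x, by simp [ruleT, Finset.mem_union]; tauto, hvx⟩
  · obtain rfl : v = Sum.inl 4 := by simpa using h
    have := inlb_mem_spath (a := 2) (b := 4) (base := 11 + M.ri i) hqi
    rw [mem_varsF] at this ⊢
    obtain ⟨x, hx, hvx⟩ := this
    exact ⟨x, by simp [ruleT, Finset.mem_union]; tauto, hvx⟩

lemma varsF_ruleEx_body (M : TCM) :
    varsF (ruleEx M).1 = {Sum.inl 1, Sum.inl 2} := by
  ext v
  rw [mem_varsF]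
  simp only [ruleEx, Finset.mem_insert, Finset.mem_singleton]
  constructor
  · rintro ⟨a, rfl | rfl, hva⟩
    · simp only [List.mem_cons, List.mem_singleton, List.not_mem_nil, or_false, vt] at hva
      rcases hva with h | h
      · left; simpa using h
      · right; simpa using h
    · simp only [List.mem_singleton, vt] at hva
      right; simpa using hva
  · rintro (rfl | rfl)
    · exact ⟨(pG, [vt 1, vt 2]), Or.inl rfl, by simp [vt]⟩
    · exact ⟨(pEnd, [vt 2]), Or.inr rfl, by simp [vt]⟩
/-! ### G. head structure -/

def HeadOK (R : Rule) : Prop :=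
  ∀ h ∈ R.2, (h.1 ≠ pEnd ∧ h.1 ≠ pS0) ∧ ∀ x ∈ h.2, ∃ u, x = Sum.inr u

lemma vt_inr (n : ℕ) : ∃ u, vt n = Sum.inr u := ⟨_, rfl⟩

lemma headOK_ruleS : HeadOK ruleS := by
  intro h hh
  simp only [ruleS, Finset.mem_singleton] at hh
  subst hh
  refine ⟨⟨by decide, by decide⟩, ?_⟩
  intro x hx
  simp only [List.mem_cons, List.not_mem_nil, or_false] at hx
  rcases hx with rfl | rfl
  exacts [vt_inr 0, vt_inr 1]

lemma headOK_ruleFloodProp : HeadOK ruleFloodProp := by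
  intro h hh
  simp only [ruleFloodProp, Finset.mem_singleton] at hh
  subst hh
  refine ⟨⟨by decide, by decide⟩, ?_⟩
  intro x hx
  simp only [List.mem_cons, List.not_mem_nil, or_false] at hx
  rcases hx with rfl
  exact vt_inr 1

lemma headOK_ruleSEnd : HeadOK ruleSEnd := by
  intro h hh
  simp only [ruleSEnd, Finset.mem_singleton] at hh
  subst hh
  refine ⟨⟨by decide, by decide⟩, ?_⟩
  intro x hx
  simp only [List.mem_cons, List.not_mem_nil, or_false] at hx
  rcases hx with rfl | rfl <;> exact vt_inr 0

lemma headOK_ruleGInit : HeadOK ruleGInit := by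
  intro h hh
  simp only [ruleGInit, Finset.mem_singleton] at hh
  subst hh
  refine ⟨⟨by decide, by decide⟩, ?_⟩
  intro x hx
  simp only [List.mem_cons, List.not_mem_nil, or_false] at hx
  rcases hx with rfl | rfl
  exacts [vt_inr 0, vt_inr 1]

lemma headOK_ruleR (M : TCM) (i : ℕ) : HeadOK (ruleR M i) := by
  intro h hh
  simp only [ruleR, Finset.mem_singleton] at hh
  subst hh
  refine ⟨⟨by simp [pR, pEnd], by simp [pR, pS0]; omega⟩, ?_⟩
  intro x hx
  simp only [List.mem_cons, List.not_mem_nil, or_false] at hx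
  rcases hx with rfl | rfl
  exacts [vt_inr 0, vt_inr 2]

lemma headOK_ruleT (M : TCM) (i : ℕ) : HeadOK (ruleT M i) := by
  intro h hh
  simp only [ruleT, Finset.mem_singleton] at hh
  subst hh
  refine ⟨⟨by simp [pT, pEnd], by simp [pT, pS0]; omega⟩, ?_⟩
  intro x hx
  simp only [List.mem_cons, List.not_mem_nil, or_false] at hx
  rcases hx with rfl | rfl | rfl
  exacts [vt_inr 0, vt_inr 3, vt_inr 4]

lemma headOK_ruleGStep (i : ℕ) : HeadOK (ruleGStep i) := by
  intro h hh
  simp only [ruleGStep, Finset.mem_singleton] at hh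
  subst hh
  refine ⟨⟨by decide, by decide⟩, ?_⟩
  intro x hx
  simp only [List.mem_cons, List.not_mem_nil, or_false] at hx
  rcases hx with rfl | rfl
  exacts [vt_inr 0, vt_inr 2]

lemma headOK_ruleFloodGen (M : TCM) : HeadOK (ruleFloodGen M) := by
  intro h hh
  simp only [ruleFloodGen, Finset.mem_union, Finset.mem_singleton, Finset.mem_biUnion,
    Finset.mem_range, Finset.mem_insert] at hh
  rcases hh with rfl | ⟨j, hj, rfl | rfl⟩
  · refine ⟨⟨by decide, by decide⟩, ?_⟩
    intro x hx
    simp only [List.mem_cons, List.not_mem_nil, or_false] at hx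
    rcases hx with rfl | rfl
    exacts [vt_inr 0, vt_inr 1]
  · refine ⟨⟨by simp [pR, pEnd], by simp [pR, pS0]; omega⟩, ?_⟩
    intro x hx
    simp only [List.mem_cons, List.not_mem_nil, or_false] at hx
    rcases hx with rfl | rfl
    exacts [vt_inr 0, vt_inr 1]
  · refine ⟨⟨by simp [pT, pEnd], by simp [pT, pS0]; omega⟩, ?_⟩
    intro x hx
    simp only [List.mem_cons, List.not_mem_nil, or_false] at hx
    rcases hx with rfl | rfl | rfl
    exacts [vt_inr 0, vt_inr 1, vt_inr 2]

lemma RM_datalog {M : TCM} {R : Rule} (hR : R ∈ RM M) (hne : R ≠ ruleEx M) :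
    varsF R.2 ⊆ varsF R.1 ∧ HeadOK R := by
  rcases mem_RM hR with rfl | rfl | rfl | rfl | rfl | rfl | ⟨i, hi, rfl | rfl | rfl⟩
  · exact ⟨dl_ruleS, headOK_ruleS⟩
  · exact ⟨dl_ruleFloodProp, headOK_ruleFloodProp⟩
  · exact ⟨dl_ruleSEnd, headOK_ruleSEnd⟩
  · exact ⟨dl_ruleGInit, headOK_ruleGInit⟩
  · exact ⟨dl_ruleFloodGen M, headOK_ruleFloodGen M⟩
  · exact absurd rfl hne
  · exact ⟨dl_ruleR M i, headOK_ruleR M i⟩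
  · exact ⟨dl_ruleT M i, headOK_ruleT M i⟩
  · exact ⟨dl_ruleGStep i, headOK_ruleGStep i⟩

/-! ### ruleEx computations -/

lemma ruleEx_extSub1 {M : TCM} {t : Trigger} (hr : t.rule = ruleEx M) :
    t.extSub (Sum.inl 1) = t.sub (Sum.inl 1) :=
  extSub_of_mem (by rw [hr, varsF_ruleEx_body]; simp)

lemma ruleEx_extSub0 {M : TCM} {t : Trigger} (hr : t.rule = ruleEx M)
    (h2 : t.sub (Sum.inl 2) = wC) :
    t.extSub (Sum.inl 0) = wit M (t.sub (Sum.inl 1)) := by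
  rw [extSub_of_not_mem (by rw [hr, varsF_ruleEx_body]; simp)]
  rw [wit]
  have hcode : t.code = Encodable.encode ((ruleEx M),
      ({(Sum.inl 1, t.sub (Sum.inl 1)), (Sum.inl 2, wC)} : Finset (Var × FTerm))) := by
    rw [Trigger.code, hr, varsF_ruleEx_body]
    congr 1
    rw [Prod.mk.injEq]
    refine ⟨rfl, ?_⟩
    rw [Finset.image_insert, Finset.image_singleton, h2]
  rw [hcode]

lemma ruleEx_head_elim {M : TCM} {h : Atom} (hh : h ∈ (ruleEx M).2) :
    h = (pS0, [vt 0, vt 1]) ∨ h = (pR 0, [vt 0, vt 0]) ∨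
      ∃ j < M.p, h = (pT j, [vt 0, vt 0, vt 0]) := by
  simp only [ruleEx, Finset.mem_union, Finset.mem_insert, Finset.mem_singleton,
    Finset.mem_biUnion, Finset.mem_range] at hh
  tauto
/-! ### H. the invariant -/

def AdomOK (M : TCM) (J : Set Atom) (x : FTerm) : Prop :=
  ∃ k, x = eSeq M k ∧ (k = 0 ∨ ((pS0, [eSeq M k, eSeq M (k-1)]) : Atom) ∈ J)

def ChInv (M : TCM) (J : Set Atom) : Prop :=
  (∀ l, ((pEnd, l) : Atom) ∈ J → l = [wC]) ∧
  (∀ a ∈ J, ∀ x ∈ a.2, AdomOK M J x) ∧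
  (∀ l, ((pS0, l) : Atom) ∈ J → ∃ k, l = [eSeq M (k+1), eSeq M k])

lemma AdomOK_mono {M : TCM} {J J' : Set Atom} (h : J ⊆ J') {x : FTerm}
    (hx : AdomOK M J x) : AdomOK M J' x := by
  obtain ⟨k, rfl, hk⟩ := hx
  exact ⟨k, rfl, hk.imp id (fun h' => h h')⟩

lemma sub_AdomOK {M : TCM} {J : Set Atom} {t : Trigger} (hI : ChInv M J) (hOn : t.isOn J)
    {v : Var} (hv : v ∈ varsF t.rule.1) : AdomOK M J (t.sub v) := by
  obtain ⟨a, ha, hxa⟩ := sub_mem_adom hOn hv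
  exact hI.2.1 a ha _ hxa

lemma Inv_step_datalog {M : TCM} {J : Set Atom} (hI : ChInv M J) {t : Trigger}
    (hOn : t.isOn J) (hDL : varsF t.rule.2 ⊆ varsF t.rule.1) (hHO : HeadOK t.rule) :
    ChInv M (J ∪ ↑t.out) := by
  have hout : ∀ a ∈ t.out, a.1 ≠ pEnd ∧ a.1 ≠ pS0 ∧ ∀ x ∈ a.2, AdomOK M J x := by
    intro a ha
    obtain ⟨h, hh, rfl⟩ := Finset.mem_image.1 ha
    obtain ⟨⟨hp1, hp2⟩, hargs⟩ := hHO h hh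
    refine ⟨hp1, hp2, ?_⟩
    intro x hx
    simp only [applyA, List.mem_map] at hx
    obtain ⟨y, hy, rfl⟩ := hx
    obtain ⟨u, rfl⟩ := hargs y hy
    rw [show applyT t.extSub (Sum.inr u) = t.extSub u from rfl,
      extSub_of_mem (hDL (mem_varsF.2 ⟨h, hh, hy⟩))]
    exact sub_AdomOK hI hOn (hDL (mem_varsF.2 ⟨h, hh, hy⟩))
  refine ⟨?_, ?_, ?_⟩
  · intro l hl
    rcases hl with hl | hl
    · exact hI.1 l hl
    · exact absurd rfl (hout _ hl).1
  · intro a ha x hx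
    rcases ha with ha | ha
    · exact AdomOK_mono Set.subset_union_left (hI.2.1 a ha x hx)
    · exact AdomOK_mono Set.subset_union_left ((hout a ha).2.2 x hx)
  · intro l hl
    rcases hl with hl | hl
    · exact hI.2.2 l hl
    · exact absurd rfl (hout _ hl).2.1

lemma ruleEx_sub2 {M : TCM} {J : Set Atom} (hI : ChInv M J) {t : Trigger}
    (hr : t.rule = ruleEx M) (hOn : t.isOn J) : t.sub (Sum.inl 2) = wC := by
  have hOn' : IsHomOn t.sub ((ruleEx M).1 : Set Atom) J := by
    rw [Trigger.isOn, hr] at hOn; exact hOn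
  have hE : applyA t.sub (pEnd, [vt 2]) ∈ J := hOn' _ (by simp [ruleEx])
  have h := hI.1 _ hE
  simpa [applyT, vt] using h

lemma ruleEx_sub1_AdomOK {M : TCM} {J : Set Atom} (hI : ChInv M J) {t : Trigger}
    (hr : t.rule = ruleEx M) (hOn : t.isOn J) : AdomOK M J (t.sub (Sum.inl 1)) := by
  have hOn' : IsHomOn t.sub ((ruleEx M).1 : Set Atom) J := by
    rw [Trigger.isOn, hr] at hOn; exact hOn
  have hG : applyA t.sub (pG, [vt 1, vt 2]) ∈ J := hOn' _ (by simp [ruleEx])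
  refine hI.2.1 _ hG (t.sub (Sum.inl 1)) ?_
  simp [applyA, applyT, vt]

lemma ruleEx_S0_mem {M : TCM} {t : Trigger} (hr : t.rule = ruleEx M)
    (h2 : t.sub (Sum.inl 2) = wC) {k : ℕ} (hk1 : t.sub (Sum.inl 1) = eSeq M k) :
    ((pS0, [eSeq M (k+1), eSeq M k]) : Atom) ∈ t.out := by
  have hmem : (pS0, [vt 0, vt 1]) ∈ t.rule.2 := by rw [hr]; simp [ruleEx]
  have h3 := Finset.mem_image_of_mem (applyA t.extSub) hmem
  rw [show applyA t.extSub (pS0, [vt 0, vt 1])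
      = (pS0, [t.extSub (Sum.inl 0), t.extSub (Sum.inl 1)]) from rfl,
    ruleEx_extSub0 hr h2, ruleEx_extSub1 hr, hk1] at h3
  exact h3

lemma Inv_step_ruleEx {M : TCM} {J : Set Atom} (hI : ChInv M J) {t : Trigger}
    (hr : t.rule = ruleEx M) (hOn : t.isOn J) : ChInv M (J ∪ ↑t.out) := by
  have h2 : t.sub (Sum.inl 2) = wC := ruleEx_sub2 hI hr hOn
  obtain ⟨k, hk1, hk2⟩ := ruleEx_sub1_AdomOK hI hr hOn
  have hx0 : t.extSub (Sum.inl 0) = eSeq M (k+1) := by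
    rw [ruleEx_extSub0 hr h2, hk1]; rfl
  have hx1 : t.extSub (Sum.inl 1) = eSeq M k := by rw [ruleEx_extSub1 hr, hk1]
  have hS0mem := ruleEx_S0_mem hr h2 hk1
  have hout : ∀ a ∈ t.out, a.1 ≠ pEnd ∧ (a.1 = pS0 → a.2 = [eSeq M (k+1), eSeq M k]) ∧
      ∀ x ∈ a.2, x = eSeq M (k+1) ∨ x = eSeq M k := by
    intro a ha
    obtain ⟨h, hh, rfl⟩ := Finset.mem_image.1 ha
    rw [hr] at hh
    rcases ruleEx_head_elim hh with rfl | rfl | ⟨j, hj, rfl⟩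
    · rw [show applyA t.extSub (pS0, [vt 0, vt 1])
          = (pS0, [t.extSub (Sum.inl 0), t.extSub (Sum.inl 1)]) from rfl, hx0, hx1]
      refine ⟨by simp [pS0, pEnd], fun _ => rfl, ?_⟩
      intro x hx
      simp only [List.mem_cons, List.not_mem_nil, or_false] at hx
      tauto
    · rw [show applyA t.extSub (pR 0, [vt 0, vt 0])
          = (pR 0, [t.extSub (Sum.inl 0), t.extSub (Sum.inl 0)]) from rfl, hx0]
      refine ⟨by simp [pR, pEnd], fun hc => absurd hc (by simp [pR, pS0]), ?_⟩
      intro x hx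
      simp only [List.mem_cons, List.not_mem_nil, or_false] at hx
      tauto
    · rw [show applyA t.extSub (pT j, [vt 0, vt 0, vt 0])
          = (pT j, [t.extSub (Sum.inl 0), t.extSub (Sum.inl 0), t.extSub (Sum.inl 0)]) from rfl,
        hx0]
      refine ⟨by simp [pT, pEnd], fun hc => absurd hc (by simp [pT, pS0]; omega), ?_⟩
      intro x hx
      simp only [List.mem_cons, List.not_mem_nil, or_false] at hx
      tauto
  have hAOK : ∀ x, (x = eSeq M (k+1) ∨ x = eSeq M k) → AdomOK M (J ∪ ↑t.out) x := by
    rintro x (rfl | rfl)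
    · exact ⟨k+1, rfl, Or.inr (by simpa using Or.inr (Finset.mem_coe.2 hS0mem))⟩
    · exact AdomOK_mono Set.subset_union_left ⟨k, rfl, hk2⟩
  refine ⟨?_, ?_, ?_⟩
  · intro l hl
    rcases hl with hl | hl
    · exact hI.1 l hl
    · exact absurd rfl (hout _ hl).1
  · intro a ha x hx
    rcases ha with ha | ha
    · exact AdomOK_mono Set.subset_union_left (hI.2.1 a ha x hx)
    · exact hAOK x ((hout a ha).2.2 x hx)
  · intro l hl
    rcases hl with hl | hl
    · exact hI.2.2 l hl
    · exact ⟨k, (hout _ hl).2.1 rfl⟩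

lemma Inv_IE (M : TCM) : ChInv M IE := by
  refine ⟨?_, ?_, ?_⟩
  · intro l hl
    rw [IE, Set.mem_singleton_iff, Prod.mk.injEq] at hl
    exact hl.2
  · intro a ha x hx
    rw [IE, Set.mem_singleton_iff] at ha
    subst ha
    simp only [List.mem_singleton] at hx
    exact ⟨0, by simpa [eSeq] using hx, Or.inl rfl⟩
  · intro l hl
    rw [IE, Set.mem_singleton_iff, Prod.mk.injEq] at hl
    exact absurd hl.1 (by decide)

lemma Inv_inst {M : TCM} (D : Deriv (RM M) IE) : ∀ n, ChInv M (D.inst n) := by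
  intro n
  induction n with
  | zero => exact Inv_IE M
  | succ n ih =>
    show ChInv M (instSeq IE D.steps (n+1))
    rw [instSeq]
    cases hs : D.steps n with
    | none => simpa [Deriv.inst] using ih
    | some t =>
      obtain ⟨hrule, hOn, _⟩ := D.valid n t hs
      by_cases he : t.rule = ruleEx M
      · exact Inv_step_ruleEx ih he hOn
      · obtain ⟨hDL, hHO⟩ := RM_datalog hrule he
        exact Inv_step_datalog ih hOn hDL hHO
/-! ### I. rigidity, non-applicability, closure -/

lemma rigid {M : TCM} {J : Set Atom} (hI : ChInv M J) {σ : Subst}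
    (hσ : IsHomOn σ J J) : ∀ x ∈ adom J, applyT σ x = x := by
  have main : ∀ k, (k = 0 ∨ ((pS0, [eSeq M k, eSeq M (k-1)]) : Atom) ∈ J) →
      applyT σ (eSeq M k) = eSeq M k := by
    intro k
    induction k with
    | zero => intro _; rfl
    | succ k ih =>
      rintro (h | h)
      · exact absurd h (Nat.succ_ne_zero k)
      · simp only [Nat.add_sub_cancel] at h
        have hkadom : AdomOK M J (eSeq M k) := by
          refine hI.2.1 _ h (eSeq M k) ?_
          simp
        obtain ⟨k', hk', hdisj⟩ := hkadom
        have hkk : k' = k := eSeq_injective M hk'.symm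
        rw [hkk] at hdisj
        have hfixk : applyT σ (eSeq M k) = eSeq M k := ih hdisj
        have h2 := hσ _ h
        rw [show applyA σ (pS0, [eSeq M (k+1), eSeq M k])
            = (pS0, [applyT σ (eSeq M (k+1)), applyT σ (eSeq M k)]) from rfl, hfixk] at h2
        obtain ⟨j, hj⟩ := hI.2.2 _ h2
        simp only [List.cons.injEq, and_true] at hj
        have hjk : j = k := eSeq_injective M hj.2.symm
        rw [hjk] at hj
        simpa using hj.1
  intro x hx
  obtain ⟨a, ha, hxa⟩ := hx
  obtain ⟨k, rfl, hk⟩ := hI.2.1 a ha x hxa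
  exact main k hk

lemma datalog_out_fix {J : Set Atom} {t : Trigger} (hOn : t.isOn J)
    (hDL : varsF t.rule.2 ⊆ varsF t.rule.1) {σ : Subst}
    (hfix : ∀ x ∈ adom J, applyT σ x = x) :
    ∀ a ∈ t.out, applyA σ a = a := by
  intro a ha
  obtain ⟨h, hh, rfl⟩ := Finset.mem_image.1 ha
  simp only [applyA]
  congr 1
  rw [List.map_map]
  apply List.map_congr_left
  intro y hy
  cases y with
  | inl c => rfl
  | inr v =>
    have hvb := hDL (mem_varsF.2 ⟨h, hh, hy⟩)
    show applyT σ (t.extSub v) = t.extSub v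
    rw [extSub_of_mem hvb]
    exact hfix _ (sub_mem_adom hOn hvb)

lemma ruleEx_out_fix {M : TCM} {J : Set Atom} (hI : ChInv M J) {t : Trigger}
    (hr : t.rule = ruleEx M) (hOn : t.isOn J) {σ : Subst}
    (hσout : ∀ a ∈ t.out, applyA σ a ∈ J)
    (hfix : ∀ x ∈ adom J, applyT σ x = x) :
    ∀ a ∈ t.out, applyA σ a = a := by
  have h2 := ruleEx_sub2 hI hr hOn
  obtain ⟨k, hk1, hk2⟩ := ruleEx_sub1_AdomOK hI hr hOn
  have hx0 : t.extSub (Sum.inl 0) = eSeq M (k+1) := by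
    rw [ruleEx_extSub0 hr h2, hk1]; rfl
  have hx1 : t.extSub (Sum.inl 1) = eSeq M k := by rw [ruleEx_extSub1 hr, hk1]
  have hfixk : applyT σ (eSeq M k) = eSeq M k := by
    rcases hk2 with rfl | hmem
    · rfl
    · exact hfix _ ⟨_, hmem, by simp⟩
  have hS0mem := ruleEx_S0_mem hr h2 hk1
  have hS0in : applyA σ (pS0, [eSeq M (k+1), eSeq M k]) ∈ J := hσout _ hS0mem
  rw [show applyA σ (pS0, [eSeq M (k+1), eSeq M k])
      = (pS0, [applyT σ (eSeq M (k+1)), applyT σ (eSeq M k)]) from rfl, hfixk] at hS0in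
  obtain ⟨j, hj⟩ := hI.2.2 _ hS0in
  simp only [List.cons.injEq, and_true] at hj
  have hjk : j = k := eSeq_injective M hj.2.symm
  rw [hjk] at hj
  have hfixk1 : applyT σ (eSeq M (k+1)) = eSeq M (k+1) := by simpa using hj.1
  intro a ha
  obtain ⟨h, hh, rfl⟩ := Finset.mem_image.1 ha
  rw [hr] at hh
  have harg : ∀ y ∈ h.2, applyT σ (applyT t.extSub y) = applyT t.extSub y := by
    have hfix0 : applyT σ (applyT t.extSub (vt 0)) = applyT t.extSub (vt 0) := by
      show applyT σ (t.extSub (Sum.inl 0)) = t.extSub (Sum.inl 0)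
      rw [hx0]; exact hfixk1
    have hfix1 : applyT σ (applyT t.extSub (vt 1)) = applyT t.extSub (vt 1) := by
      show applyT σ (t.extSub (Sum.inl 1)) = t.extSub (Sum.inl 1)
      rw [hx1]; exact hfixk
    rcases ruleEx_head_elim hh with rfl | rfl | ⟨jj, hjj, rfl⟩
    · intro y hy
      simp only [List.mem_cons, List.not_mem_nil, or_false] at hy
      rcases hy with rfl | rfl
      exacts [hfix0, hfix1]
    · intro y hy
      simp only [List.mem_cons, List.not_mem_nil, or_false] at hy
      rcases hy with rfl | rfl
      exacts [hfix0, hfix0]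
    · intro y hy
      simp only [List.mem_cons, List.not_mem_nil, or_false] at hy
      rcases hy with rfl | rfl | rfl
      exacts [hfix0, hfix0, hfix0]
  simp only [applyA]
  congr 1
  rw [List.map_map]
  exact List.map_congr_left harg

lemma hom_out_subset {M : TCM} {J : Set Atom} (hI : ChInv M J) {t : Trigger}
    (hR : t.rule ∈ RM M) (hOn : t.isOn J) {σ : Subst}
    (hσ : IsHomOn σ (J ∪ ↑t.out) J) : (↑t.out : Set Atom) ⊆ J := by
  have hσJ : IsHomOn σ J J := fun a ha => hσ a (Or.inl ha)
  have hfix := rigid hI hσJ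
  have hσout : ∀ a ∈ t.out, applyA σ a ∈ J := fun a ha => hσ a (Or.inr ha)
  intro a ha
  by_cases he : t.rule = ruleEx M
  · rw [← ruleEx_out_fix hI he hOn hσout hfix a ha]; exact hσout a ha
  · rw [← datalog_out_fix hOn (RM_datalog hR he).1 hfix a ha]; exact hσout a ha

lemma out_eq_of_frontier {M : TCM} {J : Set Atom} (hI : ChInv M J) {t t' : Trigger}
    (hR : t.rule ∈ RM M) (hrr : t'.rule = t.rule) (hOn : t.isOn J) (hOn' : t'.isOn J)
    (hfr : ∀ v ∈ frontierOf t.rule, t'.sub v = t.sub v) : t'.out = t.out := by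
  rw [Trigger.out, Trigger.out, hrr]
  apply Finset.image_congr
  intro h hh
  have hh' : h ∈ t.rule.2 := hh
  by_cases he : t.rule = ruleEx M
  · have h2 := ruleEx_sub2 hI he hOn
    have h2' := ruleEx_sub2 hI (hrr.trans he) hOn'
    have hfr1 : t'.sub (Sum.inl 1) = t.sub (Sum.inl 1) := by
      apply hfr
      rw [frontierOf, Finset.mem_inter]
      constructor
      · rw [he, varsF_ruleEx_body]; simp
      · rw [mem_varsF]
        refine ⟨(pS0, [vt 0, vt 1]), ?_, by simp [vt]⟩
        rw [he]; simp [ruleEx]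
    have hx0 : t'.extSub (Sum.inl 0) = t.extSub (Sum.inl 0) := by
      rw [ruleEx_extSub0 (hrr.trans he) h2', ruleEx_extSub0 he h2, hfr1]
    have hx1 : t'.extSub (Sum.inl 1) = t.extSub (Sum.inl 1) := by
      rw [ruleEx_extSub1 (hrr.trans he), ruleEx_extSub1 he, hfr1]
    rw [he] at hh'
    simp only [applyA]
    congr 1
    apply List.map_congr_left
    intro y hy
    rcases ruleEx_head_elim hh' with rfl | rfl | ⟨jj, hjj, rfl⟩ <;>
      simp only [List.mem_cons, List.not_mem_nil, or_false] at hy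
    · rcases hy with rfl | rfl
      exacts [hx0, hx1]
    · rcases hy with rfl | rfl
      exacts [hx0, hx0]
    · rcases hy with rfl | rfl | rfl
      exacts [hx0, hx0, hx0]
  · obtain ⟨hDL, _⟩ := RM_datalog hR he
    simp only [applyA]
    congr 1
    apply List.map_congr_left
    intro y hy
    cases y with
    | inl c => rfl
    | inr v =>
      have hvh : v ∈ varsF t.rule.2 := mem_varsF.2 ⟨h, hh', hy⟩
      have hvb : v ∈ varsF t.rule.1 := hDL hvh
      show t'.extSub v = t.extSub v
      rw [extSub_of_mem (by rw [hrr]; exact hvb), extSub_of_mem hvb,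
        hfr v (Finset.mem_inter.2 ⟨hvb, hvh⟩)]

lemma nonapp {M : TCM} {J : Set Atom} (X : ChaseVariant) (hI : ChInv M J) {t : Trigger}
    (hR : t.rule ∈ RM M) (hOn : t.isOn J) (h : ¬ Applicable X t J) :
    (↑t.out : Set Atom) ⊆ J := by
  cases X with
  | O => exact not_not.1 h
  | SO =>
    rw [Applicable] at h
    push_neg at h
    obtain ⟨t', hrr, hOn', hfr, hsub⟩ := h
    exact (out_eq_of_frontier hI hR hrr hOn hOn' hfr) ▸ hsub
  | R =>
    rw [Applicable] at h
    obtain ⟨σ, hret⟩ := not_not.1 h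
    exact hom_out_subset hI hR hOn hret.1
  | E =>
    rw [Applicable] at h
    obtain ⟨σ, hσ⟩ := not_not.1 h
    exact hom_out_subset hI hR hOn hσ

lemma trigger_isOn_mono {J J' : Set Atom} {t : Trigger} (h : J ⊆ J') (hOn : t.isOn J) :
    t.isOn J' := fun a ha => h (hOn a ha)

lemma out_subset_res {M : TCM} {X : ChaseVariant} (D : Deriv (RM M) IE) (hfair : D.Fair X)
    {t : Trigger} (hR : t.rule ∈ RM M) {i : ℕ} (hOn : t.isOn (D.inst i)) :
    (↑t.out : Set Atom) ⊆ D.res := by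
  have hInv := Inv_inst D
  by_cases happ : Applicable X t (D.inst i)
  · obtain ⟨j, hij, hnot⟩ := hfair i t hR hOn happ
    have hOn' : t.isOn (D.inst j) := trigger_isOn_mono (D.inst_mono (le_of_lt hij)) hOn
    exact (nonapp X (hInv j) hR hOn' hnot).trans (D.inst_subset_res j)
  · exact (nonapp X (hInv i) hR hOn happ).trans (D.inst_subset_res i)

lemma rule_closure {M : TCM} {X : ChaseVariant} (D : Deriv (RM M) IE) (hfair : D.Fair X)
    {R : Rule} (hR : R ∈ RM M) (σ : Subst)
    (hbody : ∀ a ∈ R.1, applyA σ a ∈ D.res) :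
    ∀ h ∈ R.2, applyA (Trigger.extSub ⟨R, σ⟩) h ∈ D.res := by
  obtain ⟨n, hn⟩ := finset_subset_inst D (R.1.image (applyA σ)) (by
    intro a ha
    obtain ⟨b, hb, rfl⟩ := Finset.mem_image.1 ha
    exact hbody b hb)
  have hOn : (Trigger.mk R σ).isOn (D.inst n) := by
    intro a ha
    exact hn _ (Finset.mem_image_of_mem _ ha)
  intro h hh
  exact out_subset_res D hfair hR hOn (Finset.mem_coe.2 (Finset.mem_image_of_mem _ hh))

lemma applyA_extSub_eq_sub {t : Trigger} (hDL : varsF t.rule.2 ⊆ varsF t.rule.1)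
    {h : Atom} (hh : h ∈ t.rule.2) : applyA t.extSub h = applyA t.sub h := by
  simp only [applyA]
  congr 1
  apply List.map_congr_left
  intro y hy
  cases y with
  | inl c => rfl
  | inr v => exact extSub_of_mem (hDL (mem_varsF.2 ⟨h, hh, hy⟩))

lemma rule_closure_D {M : TCM} {X : ChaseVariant} (D : Deriv (RM M) IE) (hfair : D.Fair X)
    {R : Rule} (hR : R ∈ RM M) (hDL : varsF R.2 ⊆ varsF R.1) (σ : Subst)
    (hbody : ∀ a ∈ R.1, applyA σ a ∈ D.res) :
    ∀ h ∈ R.2, applyA σ h ∈ D.res := by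
  intro h hh
  have := rule_closure D hfair hR σ hbody h hh
  rwa [applyA_extSub_eq_sub (t := Trigger.mk R σ) hDL hh] at this
/-! ### J. derivations in the result -/

def sub3 (x y z : FTerm) : Subst := fun v =>
  if v = Sum.inl 0 then x else if v = Sum.inl 1 then y else z

lemma sub3_0 (x y z : FTerm) : sub3 x y z (Sum.inl 0) = x := if_pos rfl
lemma sub3_1 (x y z : FTerm) : sub3 x y z (Sum.inl 1) = y := by
  rw [sub3, if_neg (by simp), if_pos rfl]
lemma sub3_2 (x y z : FTerm) : sub3 x y z (Sum.inl 2) = z := by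
  rw [sub3, if_neg (by simp), if_neg (by simp)]

lemma applyT_var (σ : Subst) (n : ℕ) : applyT σ (vt n) = σ (Sum.inl n) := rfl

section Deriv
variable {M : TCM} {X : ChaseVariant} {D : Deriv (RM M) IE}

lemma end_mem (D : Deriv (RM M) IE) : ((pEnd, [wC]) : Atom) ∈ D.res :=
  D.inst_subset_res 0 rfl

lemma step_S0_S (hfair : D.Fair X) {x y : FTerm} (h : ((pS0, [x, y]) : Atom) ∈ D.res) :
    ((pS, [x, y]) : Atom) ∈ D.res := by
  have key := rule_closure_D D hfair (ruleS_mem M) dl_ruleS (sub3 x y y) ?_ (pS, [vt 0, vt 1])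
    (by simp [ruleS])
  · rwa [show applyA (sub3 x y y) (pS, [vt 0, vt 1])
      = (pS, [sub3 x y y (Sum.inl 0), sub3 x y y (Sum.inl 1)]) from rfl, sub3_0, sub3_1] at key
  · intro a ha
    simp only [ruleS, Finset.mem_singleton] at ha
    subst ha
    rwa [show applyA (sub3 x y y) (pS0, [vt 0, vt 1])
      = (pS0, [sub3 x y y (Sum.inl 0), sub3 x y y (Sum.inl 1)]) from rfl, sub3_0, sub3_1]

lemma step_S_Flood (hfair : D.Fair X) {x y : FTerm} (h : ((pS, [x, y]) : Atom) ∈ D.res) :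
    ((pFlood, [y]) : Atom) ∈ D.res := by
  have key := rule_closure_D D hfair (ruleFloodProp_mem M) dl_ruleFloodProp (sub3 x y y) ?_
    (pFlood, [vt 1]) (by simp [ruleFloodProp])
  · rwa [show applyA (sub3 x y y) (pFlood, [vt 1])
      = (pFlood, [sub3 x y y (Sum.inl 1)]) from rfl, sub3_1] at key
  · intro a ha
    simp only [ruleFloodProp, Finset.mem_singleton] at ha
    subst ha
    rwa [show applyA (sub3 x y y) (pS, [vt 0, vt 1])
      = (pS, [sub3 x y y (Sum.inl 0), sub3 x y y (Sum.inl 1)]) from rfl, sub3_0, sub3_1]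

lemma S_ww (hfair : D.Fair X) : ((pS, [wC, wC]) : Atom) ∈ D.res := by
  have key := rule_closure_D D hfair (ruleSEnd_mem M) dl_ruleSEnd (sub3 wC wC wC) ?_
    (pS, [vt 0, vt 0]) (by simp [ruleSEnd])
  · rwa [show applyA (sub3 wC wC wC) (pS, [vt 0, vt 0])
      = (pS, [sub3 wC wC wC (Sum.inl 0), sub3 wC wC wC (Sum.inl 0)]) from rfl, sub3_0] at key
  · intro a ha
    simp only [ruleSEnd, Finset.mem_singleton] at ha
    subst ha
    rw [show applyA (sub3 wC wC wC) (pEnd, [vt 0])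
      = (pEnd, [sub3 wC wC wC (Sum.inl 0)]) from rfl, sub3_0]
    exact end_mem D

lemma step_floodGen (hfair : D.Fair X) {x y z : FTerm}
    (hx : ((pFlood, [x]) : Atom) ∈ D.res) (hy : ((pFlood, [y]) : Atom) ∈ D.res)
    (hz : ((pFlood, [z]) : Atom) ∈ D.res) :
    ((pG, [x, y]) : Atom) ∈ D.res ∧
      ∀ j < M.p, ((pR j, [x, y]) : Atom) ∈ D.res ∧ ((pT j, [x, y, z]) : Atom) ∈ D.res := by
  have key := rule_closure_D D hfair (ruleFloodGen_mem M) (dl_ruleFloodGen M) (sub3 x y z) ?_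
  · constructor
    · have := key (pG, [vt 0, vt 1]) (by simp [ruleFloodGen])
      rwa [show applyA (sub3 x y z) (pG, [vt 0, vt 1])
        = (pG, [sub3 x y z (Sum.inl 0), sub3 x y z (Sum.inl 1)]) from rfl, sub3_0, sub3_1] at this
    · intro j hj
      constructor
      · have := key (pR j, [vt 0, vt 1]) (by
          simp only [ruleFloodGen, Finset.mem_union, Finset.mem_biUnion, Finset.mem_range]
          exact Or.inr ⟨j, hj, by simp⟩)
        rwa [show applyA (sub3 x y z) (pR j, [vt 0, vt 1])
          = (pR j, [sub3 x y z (Sum.inl 0), sub3 x y z (Sum.inl 1)]) from rfl,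
          sub3_0, sub3_1] at this
      · have := key (pT j, [vt 0, vt 1, vt 2]) (by
          simp only [ruleFloodGen, Finset.mem_union, Finset.mem_biUnion, Finset.mem_range]
          exact Or.inr ⟨j, hj, by simp⟩)
        rwa [show applyA (sub3 x y z) (pT j, [vt 0, vt 1, vt 2])
          = (pT j, [sub3 x y z (Sum.inl 0), sub3 x y z (Sum.inl 1), sub3 x y z (Sum.inl 2)])
            from rfl, sub3_0, sub3_1, sub3_2] at this
  · intro a ha
    simp only [ruleFloodGen, Finset.mem_insert, Finset.mem_singleton] at ha
    rcases ha with rfl | rfl | rfl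
    · rwa [show applyA (sub3 x y z) (pFlood, [vt 0])
        = (pFlood, [sub3 x y z (Sum.inl 0)]) from rfl, sub3_0]
    · rwa [show applyA (sub3 x y z) (pFlood, [vt 1])
        = (pFlood, [sub3 x y z (Sum.inl 1)]) from rfl, sub3_1]
    · rwa [show applyA (sub3 x y z) (pFlood, [vt 2])
        = (pFlood, [sub3 x y z (Sum.inl 2)]) from rfl, sub3_2]

lemma step_R (hfair : D.Fair X) {i : ℕ} (hi : i < M.p) {x y z : FTerm}
    (h1 : ((pR i, [x, y]) : Atom) ∈ D.res) (h2 : ((pS, [y, z]) : Atom) ∈ D.res) :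
    ((pR ((i+1) % M.p), [x, z]) : Atom) ∈ D.res := by
  have key := rule_closure_D D hfair (ruleR_mem M hi) (dl_ruleR M i) (sub3 x y z) ?_
    (pR ((i+1) % M.p), [vt 0, vt 2]) (by simp [ruleR])
  · rwa [show applyA (sub3 x y z) (pR ((i+1) % M.p), [vt 0, vt 2])
      = (pR ((i+1) % M.p), [sub3 x y z (Sum.inl 0), sub3 x y z (Sum.inl 2)]) from rfl,
      sub3_0, sub3_2] at key
  · intro a ha
    simp only [ruleR, Finset.mem_insert, Finset.mem_singleton] at ha
    rcases ha with rfl | rfl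
    · rwa [show applyA (sub3 x y z) (pR i, [vt 0, vt 1])
        = (pR i, [sub3 x y z (Sum.inl 0), sub3 x y z (Sum.inl 1)]) from rfl, sub3_0, sub3_1]
    · rwa [show applyA (sub3 x y z) (pS, [vt 1, vt 2])
        = (pS, [sub3 x y z (Sum.inl 1), sub3 x y z (Sum.inl 2)]) from rfl, sub3_1, sub3_2]

lemma step_G (hfair : D.Fair X) {i : ℕ} (hi : i < M.p) {x y z : FTerm}
    (h1 : ((pG, [x, y]) : Atom) ∈ D.res) (h2 : ((pR i, [x, y]) : Atom) ∈ D.res)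
    (h3 : ((pT i, [x, y, z]) : Atom) ∈ D.res) :
    ((pG, [x, z]) : Atom) ∈ D.res := by
  have key := rule_closure_D D hfair (ruleGStep_mem M hi) (dl_ruleGStep i) (sub3 x y z) ?_
    (pG, [vt 0, vt 2]) (by simp [ruleGStep])
  · rwa [show applyA (sub3 x y z) (pG, [vt 0, vt 2])
      = (pG, [sub3 x y z (Sum.inl 0), sub3 x y z (Sum.inl 2)]) from rfl, sub3_0, sub3_2] at key
  · intro a ha
    simp only [ruleGStep, Finset.mem_insert, Finset.mem_singleton] at ha
    rcases ha with rfl | rfl | rfl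
    · rwa [show applyA (sub3 x y z) (pG, [vt 0, vt 1])
        = (pG, [sub3 x y z (Sum.inl 0), sub3 x y z (Sum.inl 1)]) from rfl, sub3_0, sub3_1]
    · rwa [show applyA (sub3 x y z) (pR i, [vt 0, vt 1])
        = (pR i, [sub3 x y z (Sum.inl 0), sub3 x y z (Sum.inl 1)]) from rfl, sub3_0, sub3_1]
    · rwa [show applyA (sub3 x y z) (pT i, [vt 0, vt 1, vt 2])
        = (pT i, [sub3 x y z (Sum.inl 0), sub3 x y z (Sum.inl 1), sub3 x y z (Sum.inl 2)])
          from rfl, sub3_0, sub3_1, sub3_2]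

end Deriv
/-! ### K. simulation lemmas -/

def σT (M : TCM) (k j1 j2 r q : ℕ) : Subst := fun v =>
  match v with
  | Sum.inl x =>
      if x = 0 then eSeq M k
      else if x = 1 then eSeq M j1
      else if x = 2 then eSeq M j2
      else if x = 3 then eSeq M (j1 - r)
      else if x = 4 then eSeq M (j2 - q)
      else if x ≤ 10 + r then eSeq M (j1 - (x - 10))
      else eSeq M (j2 - (x - (11 + r)))
  | Sum.inr _ => wC

lemma σT_0 (M : TCM) (k j1 j2 r q : ℕ) : σT M k j1 j2 r q (Sum.inl 0) = eSeq M k := by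
  simp [σT]
lemma σT_1 (M : TCM) (k j1 j2 r q : ℕ) : σT M k j1 j2 r q (Sum.inl 1) = eSeq M j1 := by
  simp [σT]
lemma σT_2 (M : TCM) (k j1 j2 r q : ℕ) : σT M k j1 j2 r q (Sum.inl 2) = eSeq M j2 := by
  simp [σT]
lemma σT_3 (M : TCM) (k j1 j2 r q : ℕ) : σT M k j1 j2 r q (Sum.inl 3) = eSeq M (j1 - r) := by
  simp [σT]
lemma σT_4 (M : TCM) (k j1 j2 r q : ℕ) : σT M k j1 j2 r q (Sum.inl 4) = eSeq M (j2 - q) := by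
  simp [σT]
lemma σT_mid1 (M : TCM) (k j1 j2 r q : ℕ) {s : ℕ} (h1 : 1 ≤ s) (h2 : s ≤ r) :
    σT M k j1 j2 r q (Sum.inl (10 + s)) = eSeq M (j1 - s) := by
  have c0 : ¬(10 + s = 0) := by omega
  have c1 : ¬(10 + s = 1) := by omega
  have c2 : ¬(10 + s = 2) := by omega
  have c3 : ¬(10 + s = 3) := by omega
  have c4 : ¬(10 + s = 4) := by omega
  have c5 : 10 + s ≤ 10 + r := by omega
  simp only [σT, if_neg c0, if_neg c1, if_neg c2, if_neg c3, if_neg c4, if_pos c5]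
  congr 1
  omega
lemma σT_mid2 (M : TCM) (k j1 j2 r q : ℕ) {s : ℕ} (h1 : 1 ≤ s) :
    σT M k j1 j2 r q (Sum.inl (11 + r + s)) = eSeq M (j2 - s) := by
  have c0 : ¬(11 + r + s = 0) := by omega
  have c1 : ¬(11 + r + s = 1) := by omega
  have c2 : ¬(11 + r + s = 2) := by omega
  have c3 : ¬(11 + r + s = 3) := by omega
  have c4 : ¬(11 + r + s = 4) := by omega
  have c5 : ¬(11 + r + s ≤ 10 + r) := by omega
  simp only [σT, if_neg c0, if_neg c1, if_neg c2, if_neg c3, if_neg c4, if_neg c5]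
  congr 1
  omega

def σG (M : TCM) (k : ℕ) : Subst := fun v =>
  match v with
  | Sum.inl x => if x = 0 then eSeq M k else if x = 11 then eSeq M (k-1) else eSeq M (k-2)
  | Sum.inr _ => wC

lemma σG_0 (M : TCM) (k : ℕ) : σG M k (Sum.inl 0) = eSeq M k := by simp [σG]
lemma σG_1 (M : TCM) (k : ℕ) : σG M k (Sum.inl 1) = eSeq M (k-2) := by simp [σG]
lemma σG_11 (M : TCM) (k : ℕ) : σG M k (Sum.inl 11) = eSeq M (k-1) := by simp [σG]

section Deriv2
variable {M : TCM} {X : ChaseVariant} {D : Deriv (RM M) IE}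

lemma spath_hom_chain {σ : Subst} {k : ℕ}
    (hS : ∀ u ≤ k, ((pS, [eSeq M u, eSeq M (u-1)]) : Atom) ∈ D.res)
    {a b base n j : ℕ} (hj : j ≤ k)
    (hσa : σ (Sum.inl a) = eSeq M j) (hσb : σ (Sum.inl b) = eSeq M (j - n))
    (hmid : ∀ s, 0 < s → s < n → σ (Sum.inl (base + s)) = eSeq M (j - s)) :
    ∀ x ∈ spath a b base n, applyA σ x ∈ D.res := by
  intro x hx
  obtain ⟨s, hs, rfl⟩ := mem_spath_elim hx
  have hv : applyT σ (pathVar a b base n s) = eSeq M (j - s) := by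
    rcases Nat.eq_zero_or_pos s with rfl | hs0
    · rw [pathVar_zero, applyT_var, hσa]
      simp
    · rw [pathVar_mid _ _ _ (by omega) (by omega), applyT_var, hmid s hs0 hs]
  have hv1 : applyT σ (pathVar a b base n (s+1)) = eSeq M (j - (s+1)) := by
    by_cases hsn : s + 1 = n
    · rw [hsn, pathVar_last _ _ _ (by omega), applyT_var, hσb]
    · rw [pathVar_mid _ _ _ (by omega) hsn, applyT_var, hmid (s+1) (by omega) (by omega)]
  rw [show applyA σ (pS, [pathVar a b base n s, pathVar a b base n (s+1)])
      = (pS, [applyT σ (pathVar a b base n s), applyT σ (pathVar a b base n (s+1))]) from rfl,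
    hv, hv1]
  have := hS (j - s) (le_trans (Nat.sub_le _ _) hj)
  rwa [Nat.sub_sub] at this

lemma step_T (hfair : D.Fair X) {i : ℕ} (hi : i < M.p) {k : ℕ}
    (hS : ∀ u ≤ k, ((pS, [eSeq M u, eSeq M (u-1)]) : Atom) ∈ D.res)
    (hT0 : ((pT i, [eSeq M k, eSeq M k, eSeq M k]) : Atom) ∈ D.res) :
    ∀ a : ℕ,
      ((pT i, [eSeq M k, eSeq M (k - a * M.ri i), eSeq M (k - a * M.qi i)]) : Atom) ∈ D.res := by
  intro a
  induction a with
  | zero => simpa using hT0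
  | succ a ih =>
    have key := rule_closure_D D hfair (ruleT_mem M hi) (dl_ruleT M i)
      (σT M k (k - a * M.ri i) (k - a * M.qi i) (M.ri i) (M.qi i)) ?_
      (pT i, [vt 0, vt 3, vt 4]) (by simp [ruleT])
    · rw [show applyA (σT M k (k - a * M.ri i) (k - a * M.qi i) (M.ri i) (M.qi i))
          (pT i, [vt 0, vt 3, vt 4]) = (pT i,
            [σT M k (k - a * M.ri i) (k - a * M.qi i) (M.ri i) (M.qi i) (Sum.inl 0),
             σT M k (k - a * M.ri i) (k - a * M.qi i) (M.ri i) (M.qi i) (Sum.inl 3),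
             σT M k (k - a * M.ri i) (k - a * M.qi i) (M.ri i) (M.qi i) (Sum.inl 4)]) from rfl,
        σT_0, σT_3, σT_4] at key
      have e1 : k - a * M.ri i - M.ri i = k - (a+1) * M.ri i := by
        rw [Nat.sub_sub, Nat.succ_mul]
      have e2 : k - a * M.qi i - M.qi i = k - (a+1) * M.qi i := by
        rw [Nat.sub_sub, Nat.succ_mul]
      rwa [e1, e2] at key
    · intro x hx
      rw [ruleT] at hx
      rcases Finset.mem_union.1 hx with hx | hx
      · rcases Finset.mem_union.1 hx with hx | hx
        · simp only [Finset.mem_singleton] at hx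
          subst hx
          rw [show applyA (σT M k (k - a * M.ri i) (k - a * M.qi i) (M.ri i) (M.qi i))
              (pT i, [vt 0, vt 1, vt 2]) = (pT i,
                [σT M k (k - a * M.ri i) (k - a * M.qi i) (M.ri i) (M.qi i) (Sum.inl 0),
                 σT M k (k - a * M.ri i) (k - a * M.qi i) (M.ri i) (M.qi i) (Sum.inl 1),
                 σT M k (k - a * M.ri i) (k - a * M.qi i) (M.ri i) (M.qi i) (Sum.inl 2)])
              from rfl, σT_0, σT_1, σT_2]
          exact ih
        · refine spath_hom_chain hS (Nat.sub_le _ _) (σT_1 _ _ _ _ _ _) (σT_3 _ _ _ _ _ _)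
            ?_ x hx
          intro s hs0 hsr
          exact σT_mid1 M k _ _ _ _ hs0 (le_of_lt hsr)
      · refine spath_hom_chain hS (Nat.sub_le _ _) (σT_2 _ _ _ _ _ _) (σT_4 _ _ _ _ _ _)
          ?_ x hx
        intro s hs0 hsr
        have : (11 + M.ri i) + s = 11 + M.ri i + s := rfl
        exact σT_mid2 M k _ _ _ _ hs0

lemma G_two (hfair : D.Fair X) {k : ℕ}
    (hS : ∀ u ≤ k, ((pS, [eSeq M u, eSeq M (u-1)]) : Atom) ∈ D.res) :
    ((pG, [eSeq M k, eSeq M (k-2)]) : Atom) ∈ D.res := by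
  have key := rule_closure_D D hfair (ruleGInit_mem M) dl_ruleGInit (σG M k) ?_
    (pG, [vt 0, vt 1]) (by simp [ruleGInit])
  · rwa [show applyA (σG M k) (pG, [vt 0, vt 1])
      = (pG, [σG M k (Sum.inl 0), σG M k (Sum.inl 1)]) from rfl, σG_0, σG_1] at key
  · intro x hx
    rw [ruleGInit] at hx
    refine spath_hom_chain hS (le_refl k) (σG_0 M k) (σG_1 M k) ?_ x hx
    intro s hs0 hs2
    have hs1 : s = 1 := by omega
    subst hs1
    exact σG_11 M k

lemma p_one_lt (M : TCM) : 1 < M.p := by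
  have h2 : prm 0 ∣ M.p := prm_dvd_p M (by omega)
  have h3 := Nat.le_of_dvd (p_pos M) h2
  have h4 : prm 0 = 2 := rfl
  omega

lemma R_chain (hfair : D.Fair X) {k : ℕ}
    (hS : ∀ u ≤ k, ((pS, [eSeq M u, eSeq M (u-1)]) : Atom) ∈ D.res)
    (hR0 : ((pR 0, [eSeq M k, eSeq M k]) : Atom) ∈ D.res) :
    ∀ d, ((pR (d % M.p), [eSeq M k, eSeq M (k-d)]) : Atom) ∈ D.res := by
  intro d
  induction d with
  | zero => simpa using hR0
  | succ d ih =>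
    have hmod : (d % M.p + 1) % M.p = (d + 1) % M.p := by
      conv_rhs => rw [Nat.add_mod]
      rw [Nat.mod_eq_of_lt (p_one_lt M)]
    have hSd := hS (k - d) (Nat.sub_le _ _)
    rw [Nat.sub_sub] at hSd
    have := step_R hfair (Nat.mod_lt _ (p_pos M)) ih hSd
    rwa [hmod] at this

end Deriv2
/-! ### L. main chain -/

def subEx (y : FTerm) : Subst := fun v => if v = Sum.inl 1 then y else wC

lemma subEx_1 (y : FTerm) : subEx y (Sum.inl 1) = y := if_pos rfl
lemma subEx_2 (y : FTerm) : subEx y (Sum.inl 2) = wC := by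
  rw [subEx, if_neg (by simp)]

section Deriv3
variable {M : TCM} {X : ChaseVariant} {D : Deriv (RM M) IE}

lemma G_orbit (hM : ¬ M.Halts) (hfair : D.Fair X) {k : ℕ}
    (hS : ∀ u ≤ k, ((pS, [eSeq M u, eSeq M (u-1)]) : Atom) ∈ D.res)
    (hR0 : ((pR 0, [eSeq M k, eSeq M k]) : Atom) ∈ D.res)
    (hT : ∀ j < M.p, ((pT j, [eSeq M k, eSeq M k, eSeq M k]) : Atom) ∈ D.res) :
    ∀ t, ((pG, [eSeq M k, eSeq M (k - M.gIter t)]) : Atom) ∈ D.res := by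
  intro t
  induction t with
  | zero =>
    have h0 : M.gIter 0 = 2 := rfl
    rw [h0]
    exact G_two hfair hS
  | succ t ih =>
    obtain ⟨hdvd, hgstep⟩ := gIter_step M hM t
    have hi : M.gIter t % M.p < M.p := Nat.mod_lt _ (p_pos M)
    have hRn := R_chain hfair hS hR0 (M.gIter t)
    have hTn := step_T hfair hi hS (hT _ hi) (M.gIter t / M.ri (M.gIter t % M.p))
    have har : M.gIter t / M.ri (M.gIter t % M.p) * M.ri (M.gIter t % M.p) = M.gIter t :=
      Nat.div_mul_cancel hdvd
    have haq : M.gIter t / M.ri (M.gIter t % M.p) * M.qi (M.gIter t % M.p) = M.gIter (t+1) := by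
      rw [← hgstep, TCM.g, Nat.mul_div_assoc _ hdvd]
      exact Nat.mul_comm _ _
    rw [har, haq] at hTn
    exact step_G hfair hi ih hRn hTn

lemma G_w (hM : ¬ M.Halts) (hfair : D.Fair X) {k : ℕ}
    (hS : ∀ u ≤ k, ((pS, [eSeq M u, eSeq M (u-1)]) : Atom) ∈ D.res)
    (hR0 : ((pR 0, [eSeq M k, eSeq M k]) : Atom) ∈ D.res)
    (hT : ∀ j < M.p, ((pT j, [eSeq M k, eSeq M k, eSeq M k]) : Atom) ∈ D.res) :
    ((pG, [eSeq M k, wC]) : Atom) ∈ D.res := by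
  have h := G_orbit hM hfair hS hR0 hT k
  have hge : k ≤ M.gIter k := le_trans (le_of_lt (Nat.lt_two_pow_self (n := k))) (gIter_ge M hM k)
  rw [show k - M.gIter k = 0 from by omega] at h
  exact h

lemma step_Ex (hfair : D.Fair X) {k : ℕ} (hG : ((pG, [eSeq M k, wC]) : Atom) ∈ D.res) :
    ((pS0, [eSeq M (k+1), eSeq M k]) : Atom) ∈ D.res ∧
    ((pR 0, [eSeq M (k+1), eSeq M (k+1)]) : Atom) ∈ D.res ∧
    ∀ j < M.p, ((pT j, [eSeq M (k+1), eSeq M (k+1), eSeq M (k+1)]) : Atom) ∈ D.res := by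
  have hbody : ∀ a ∈ (ruleEx M).1, applyA (subEx (eSeq M k)) a ∈ D.res := by
    intro a ha
    simp only [ruleEx, Finset.mem_union, Finset.mem_insert, Finset.mem_singleton] at ha
    rcases ha with rfl | rfl
    · rw [show applyA (subEx (eSeq M k)) (pG, [vt 1, vt 2])
        = (pG, [subEx (eSeq M k) (Sum.inl 1), subEx (eSeq M k) (Sum.inl 2)]) from rfl,
        subEx_1, subEx_2]
      exact hG
    · rw [show applyA (subEx (eSeq M k)) (pEnd, [vt 2])
        = (pEnd, [subEx (eSeq M k) (Sum.inl 2)]) from rfl, subEx_2]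
      exact end_mem D
  have hkey := rule_closure D hfair (ruleEx_mem M) (subEx (eSeq M k)) hbody
  have hr : (Trigger.mk (ruleEx M) (subEx (eSeq M k))).rule = ruleEx M := rfl
  have h2 : (Trigger.mk (ruleEx M) (subEx (eSeq M k))).sub (Sum.inl 2) = wC := subEx_2 (eSeq M k)
  have hx0 : (Trigger.mk (ruleEx M) (subEx (eSeq M k))).extSub (Sum.inl 0) = eSeq M (k+1) := by
    rw [ruleEx_extSub0 hr h2]
    rw [show (Trigger.mk (ruleEx M) (subEx (eSeq M k))).sub (Sum.inl 1)
      = eSeq M k from subEx_1 (eSeq M k)]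
    rfl
  have hx1 : (Trigger.mk (ruleEx M) (subEx (eSeq M k))).extSub (Sum.inl 1) = eSeq M k := by
    rw [ruleEx_extSub1 hr]
    exact subEx_1 (eSeq M k)
  refine ⟨?_, ?_, ?_⟩
  · have := hkey (pS0, [vt 0, vt 1]) (by simp [ruleEx])
    rwa [show applyA (Trigger.mk (ruleEx M) (subEx (eSeq M k))).extSub (pS0, [vt 0, vt 1])
      = (pS0, [(Trigger.mk (ruleEx M) (subEx (eSeq M k))).extSub (Sum.inl 0),
          (Trigger.mk (ruleEx M) (subEx (eSeq M k))).extSub (Sum.inl 1)]) from rfl,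
      hx0, hx1] at this
  · have := hkey (pR 0, [vt 0, vt 0]) (by simp [ruleEx])
    rwa [show applyA (Trigger.mk (ruleEx M) (subEx (eSeq M k))).extSub (pR 0, [vt 0, vt 0])
      = (pR 0, [(Trigger.mk (ruleEx M) (subEx (eSeq M k))).extSub (Sum.inl 0),
          (Trigger.mk (ruleEx M) (subEx (eSeq M k))).extSub (Sum.inl 0)]) from rfl,
      hx0] at this
  · intro j hj
    have := hkey (pT j, [vt 0, vt 0, vt 0]) (by
      simp only [ruleEx, Finset.mem_union, Finset.mem_insert, Finset.mem_singleton,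
        Finset.mem_biUnion, Finset.mem_range]
      exact Or.inr ⟨j, hj, by simp⟩)
    rwa [show applyA (Trigger.mk (ruleEx M) (subEx (eSeq M k))).extSub (pT j, [vt 0, vt 0, vt 0])
      = (pT j, [(Trigger.mk (ruleEx M) (subEx (eSeq M k))).extSub (Sum.inl 0),
          (Trigger.mk (ruleEx M) (subEx (eSeq M k))).extSub (Sum.inl 0),
          (Trigger.mk (ruleEx M) (subEx (eSeq M k))).extSub (Sum.inl 0)]) from rfl,
      hx0] at this

lemma chain_main (hM : ¬ M.Halts) (hfair : D.Fair X) :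
    ∀ k, ((pS0, [eSeq M (k+1), eSeq M k]) : Atom) ∈ D.res ∧
      ((pR 0, [eSeq M (k+1), eSeq M (k+1)]) : Atom) ∈ D.res ∧
      (∀ j < M.p, ((pT j, [eSeq M (k+1), eSeq M (k+1), eSeq M (k+1)]) : Atom) ∈ D.res) := by
  intro k
  induction k using Nat.strong_induction_on with
  | _ k ih =>
    have hS : ∀ u ≤ k, ((pS, [eSeq M u, eSeq M (u-1)]) : Atom) ∈ D.res := by
      intro u hu
      cases u with
      | zero => exact S_ww hfair
      | succ u =>
        have h1 := step_S0_S hfair (ih u (by omega)).1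
        simpa using h1
    have hFw : ((pFlood, [wC]) : Atom) ∈ D.res := step_S_Flood hfair (S_ww hfair)
    have hwRT := step_floodGen hfair hFw hFw hFw
    have hR0 : ((pR 0, [eSeq M k, eSeq M k]) : Atom) ∈ D.res := by
      cases k with
      | zero => exact (hwRT.2 0 (p_pos M)).1
      | succ k => exact (ih k (by omega)).2.1
    have hT : ∀ j < M.p, ((pT j, [eSeq M k, eSeq M k, eSeq M k]) : Atom) ∈ D.res := by
      cases k with
      | zero => exact fun j hj => (hwRT.2 j hj).2
      | succ k => exact (ih k (by omega)).2.2
    exact step_Ex hfair (G_w hM hfair hS hR0 hT)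

end Deriv3
/-- if `M` does not halt, the `R₀`-graph of the result of any fair
`X`-derivation from `⟨R_M, {End(w)}⟩` contains an infinite clique. -/
theorem stmt_8 (M : TCM) (hM : ¬ M.Halts) (X : ChaseVariant)
    (D : Deriv (RM M) IE) (hX : D.IsX X) (hfair : D.Fair X) :
    ∃ V : Set FTerm, V.Infinite ∧ V ⊆ adom D.res ∧
      ∀ a ∈ V, ∀ b ∈ V, (pR 0, [a, b]) ∈ D.res := by
  refine ⟨Set.range (eSeq M), Set.infinite_range_of_injective (eSeq_injective M), ?_, ?_⟩
  · rintro x ⟨k, rfl⟩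
    exact ⟨(pS0, [eSeq M (k+1), eSeq M k]), (chain_main hM hfair k).1, by simp⟩
  · rintro x ⟨a, rfl⟩ y ⟨b, rfl⟩
    have hFa : ((pFlood, [eSeq M a]) : Atom) ∈ D.res :=
      step_S_Flood hfair (step_S0_S hfair (chain_main hM hfair a).1)
    have hFb : ((pFlood, [eSeq M b]) : Atom) ∈ D.res :=
      step_S_Flood hfair (step_S0_S hfair (chain_main hM hfair b).1)
    exact ((step_floodGen hfair hFa hFb hFa).2 0 (p_pos M)).1

end
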